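/- arXiv:2504.18998 — 5 statements merged into one kernel-verified Lean document; each statement's English description precedes it below -/
import Mathlib

section
/- For all integers m ≥ 1, the identity Σ_{n=1}^{m} 2(-1)^{m-n} C(2n-1, m) C(2m+1, 2n) (-1)^{n+1} B_{2n} = 1 holds, where B_{2n} denotes the Bernoulli numbers (with B_1 = -1/2 convention, i.e. B_{2n} = B_{2n}(0)). -/
section BernoulliRowSum
open Polynomial Finset



lemma bern_comp_one_sub (n : ℕ) :
    (Polynomial.bernoulli n).comp (1 - X) = ((-1 : ℚ)) ^ n • Polynomial.bernoulli n := by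
  induction n with
  | zero => simp [Polynomial.bernoulli_zero]
  | succ k ih =>
    set f := (Polynomial.bernoulli (k+1)).comp (1 - X)
        - ((-1 : ℚ)) ^ (k+1) • Polynomial.bernoulli (k+1) with hf
    have hd : derivative f = 0 := by
      rw [hf, derivative_sub, derivative_smul, derivative_comp_one_sub_X,
        Polynomial.derivative_bernoulli_add_one, mul_comp, add_comp, natCast_comp, one_comp, ih]
      simp only [Polynomial.smul_eq_C_mul, pow_succ, map_mul, map_pow, map_neg, map_one]
      ring
    have hC : f = C (f.coeff 0) := eq_C_of_derivative_eq_zero hd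
    have h0 : f.coeff 0 = 0 := by
      rw [Polynomial.coeff_zero_eq_eval_zero, hf]
      simp only [eval_sub, eval_comp, eval_sub, eval_one, eval_X, sub_zero,
        Polynomial.bernoulli_eval_one, eval_smul, smul_eq_mul, Polynomial.bernoulli_eval_zero]
      rw [_root_.bernoulli, ← mul_assoc, ← pow_add]
      have : (k + 1) + (k + 1) = 2 * (k + 1) := by ring
      rw [this, pow_mul, neg_one_sq, one_pow, one_mul, sub_self]
    have : f = 0 := by rw [hC, h0, map_zero]
    have := sub_eq_zero.mp (hf ▸ this)
    exact this




lemma bern_eval_one_sub (n : ℕ) (x : ℚ) :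
    (Polynomial.bernoulli n).eval (1 - x) = (-1 : ℚ) ^ n * (Polynomial.bernoulli n).eval x := by
  have h := congrArg (Polynomial.eval x) (bern_comp_one_sub n)
  simpa [eval_comp] using h

lemma bern_eval_expand (n : ℕ) (y : ℚ) :
    (Polynomial.bernoulli n).eval y
      = ∑ j ∈ Finset.range (n + 1), _root_.bernoulli j * (n.choose j : ℚ) * y ^ (n - j) := by
  rw [Polynomial.bernoulli, eval_finset_sum]
  simp [eval_monomial]

lemma key_eval (N : ℕ) (hN : Odd N) (x : ℚ) :
    ∑ j ∈ Finset.range (N + 1), _root_.bernoulli j * (N.choose j : ℚ) * (x + 1) ^ j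
      = - ∑ j ∈ Finset.range (N + 1),
          _root_.bernoulli j * (N.choose j : ℚ) * (x ^ (N - j) * (x + 1) ^ j) := by
  by_cases hx : x = -1
  · subst hx
    rw [Finset.sum_eq_single 0, Finset.sum_eq_single 0]
    · simp [hN.neg_one_pow]
    · intro b _ hb
      simp [zero_pow hb, show (-1 : ℚ) + 1 = 0 by ring]
    · simp
    · intro b _ hb
      simp [zero_pow hb, show (-1 : ℚ) + 1 = 0 by ring]
    · simp
  · have h1 : x + 1 ≠ 0 := fun h => hx (by linarith)
    have hsub : (1 : ℚ) - x / (x + 1) = 1 / (x + 1) := by field_simp; ring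
    have hrefl : (Polynomial.bernoulli N).eval (1 / (x + 1))
        = - (Polynomial.bernoulli N).eval (x / (x + 1)) := by
      rw [← hsub, bern_eval_one_sub, hN.neg_one_pow, neg_one_mul]
    have hL : ∑ j ∈ Finset.range (N + 1), _root_.bernoulli j * (N.choose j : ℚ) * (x + 1) ^ j
        = (x + 1) ^ N * (Polynomial.bernoulli N).eval (1 / (x + 1)) := by
      rw [bern_eval_expand, Finset.mul_sum]
      refine Finset.sum_congr rfl fun j hj => ?_
      have hjN : j ≤ N := Nat.lt_succ_iff.mp (Finset.mem_range.mp hj)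
      have hp : (x + 1) ^ N = (x + 1) ^ (N - j) * (x + 1) ^ j := by
        rw [← pow_add]; congr 1; omega
      rw [div_pow, one_pow, hp]
      field_simp
    have hR : ∑ j ∈ Finset.range (N + 1),
          _root_.bernoulli j * (N.choose j : ℚ) * (x ^ (N - j) * (x + 1) ^ j)
        = (x + 1) ^ N * (Polynomial.bernoulli N).eval (x / (x + 1)) := by
      rw [bern_eval_expand, Finset.mul_sum]
      refine Finset.sum_congr rfl fun j hj => ?_
      have hjN : j ≤ N := Nat.lt_succ_iff.mp (Finset.mem_range.mp hj)
      have hp : (x + 1) ^ N = (x + 1) ^ (N - j) * (x + 1) ^ j := by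
        rw [← pow_add]; congr 1; omega
      rw [div_pow, hp]
      field_simp
    rw [hL, hR, hrefl]
    ring

lemma poly_id (N : ℕ) (hN : Odd N) :
    ∑ j ∈ Finset.range (N + 1),
        (_root_.bernoulli j * (N.choose j : ℚ)) • ((X + 1 : ℚ[X])) ^ j
      = - ∑ j ∈ Finset.range (N + 1),
          (_root_.bernoulli j * (N.choose j : ℚ)) • ((X : ℚ[X]) ^ (N - j) * (X + 1) ^ j) := by
  apply Polynomial.funext
  intro r
  have h := key_eval N hN r
  simp only [eval_finset_sum, eval_neg, eval_smul, smul_eq_mul, eval_mul, eval_pow, eval_add,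
    eval_X, eval_one]
  exact h




lemma bern_odd_zero {k : ℕ} (hk : 1 ≤ k) : _root_.bernoulli (2 * k + 1) = 0 := by
  rw [bernoulli_eq_bernoulli'_of_ne_one (by omega), bernoulli'_eq_zero_of_odd ⟨k, rfl⟩ (by omega)]

lemma sum_range_even_odd {M : Type*} [AddCommMonoid M] (f : ℕ → M) (k : ℕ) :
    ∑ j ∈ Finset.range (2 * k), f j
      = ∑ n ∈ Finset.range k, f (2 * n) + ∑ n ∈ Finset.range k, f (2 * n + 1) := by
  induction k with
  | zero => simp
  | succ k ih =>
    rw [show 2 * (k + 1) = 2 * k + 1 + 1 by ring, Finset.sum_range_succ, Finset.sum_range_succ,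
      ih, Finset.sum_range_succ, Finset.sum_range_succ]
    abel

-- The divided identity  (★★)
lemma bern_divided (m : ℕ) (hm : 1 ≤ m) :
    (∑ i ∈ Finset.range m,
        C (_root_.bernoulli (2 * i + 2) * ((2 * m + 1).choose (2 * i + 2) : ℚ)) *
          (X + 1 : ℚ[X]) ^ (2 * i + 1))
      + C (-(((2 * m + 1 : ℕ) : ℚ) / 2))
    = - (∑ i ∈ Finset.range m,
          C (_root_.bernoulli (2 * i + 2) * ((2 * m + 1).choose (2 * i + 2) : ℚ)) *
            ((X : ℚ[X]) ^ (2 * m + 1 - (2 * i + 2)) * (X + 1) ^ (2 * i + 1)))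
        + C (((2 * m + 1 : ℕ) : ℚ) / 2) * X ^ (2 * m)
        - ∑ i ∈ Finset.range (2 * m + 1), C ((-1 : ℚ) ^ i) * (X : ℚ[X]) ^ i := by
  have hX1 : (X + 1 : ℚ[X]) ≠ 0 := by
    intro h
    have := congrArg (Polynomial.coeff · 0) h
    simp at this
  apply mul_left_cancel₀ hX1
  -- the un-divided identity (E)
  have hE := poly_id (2 * m + 1) ⟨m, rfl⟩
  simp only [Polynomial.smul_eq_C_mul] at hE
  rw [show 2 * m + 1 + 1 = 2 * (m + 1) by ring, sum_range_even_odd, sum_range_even_odd] at hE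
  -- clean up the four subsums in hE
  rw [Finset.sum_range_succ' (fun n => C (_root_.bernoulli (2*n) * ((2*m+1).choose (2*n) : ℚ)) * (X+1:ℚ[X])^(2*n)) m] at hE
  rw [Finset.sum_range_succ' (fun n => C (_root_.bernoulli (2*n) * ((2*m+1).choose (2*n) : ℚ)) * ((X:ℚ[X])^(2*m+1-2*n) * (X+1)^(2*n))) m] at hE
  have hodd1 : ∑ n ∈ Finset.range (m + 1),
      C (_root_.bernoulli (2*n+1) * ((2*m+1).choose (2*n+1) : ℚ)) * (X+1:ℚ[X])^(2*n+1)
      = C (-(((2 * m + 1 : ℕ) : ℚ) / 2)) * (X + 1) := by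
    rw [Finset.sum_eq_single 0]
    · rw [mul_zero, zero_add, pow_one, Nat.choose_one_right, _root_.bernoulli_one]
      congr 1
      push_cast
      ring
    · intro b _ hb
      rw [bern_odd_zero (by omega), zero_mul, map_zero, zero_mul]
    · intro h; exact absurd (Finset.mem_range.mpr (by omega)) h
  have hodd2 : ∑ n ∈ Finset.range (m + 1),
      C (_root_.bernoulli (2*n+1) * ((2*m+1).choose (2*n+1) : ℚ)) *
        ((X:ℚ[X])^(2*m+1-(2*n+1)) * (X+1)^(2*n+1))
      = C (-(((2 * m + 1 : ℕ) : ℚ) / 2)) * (X ^ (2*m) * (X + 1)) := by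
    rw [Finset.sum_eq_single 0]
    · rw [mul_zero, zero_add, pow_one, Nat.choose_one_right, _root_.bernoulli_one,
        show 2 * m + 1 - 1 = 2 * m by omega]
      congr 1
      push_cast
      ring
    · intro b _ hb
      rw [bern_odd_zero (by omega), zero_mul, map_zero, zero_mul]
    · intro h; exact absurd (Finset.mem_range.mpr (by omega)) h
  rw [hodd1, hodd2] at hE
  simp only [Nat.mul_zero, _root_.bernoulli_zero, Nat.choose_zero_right, Nat.cast_one, mul_one,
    one_mul, map_one, pow_zero, Nat.sub_zero] at hE
  rw [Polynomial.C_neg] at hE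
  -- geometric sum
  have hg : (X + 1 : ℚ[X]) * ∑ i ∈ Finset.range (2 * m + 1), C ((-1 : ℚ) ^ i) * (X : ℚ[X]) ^ i
      = X ^ (2 * m + 1) + 1 := by
    have h1 : ∑ i ∈ Finset.range (2 * m + 1), C ((-1 : ℚ) ^ i) * (X : ℚ[X]) ^ i
        = ∑ i ∈ Finset.range (2 * m + 1), (-X : ℚ[X]) ^ i := by
      refine Finset.sum_congr rfl fun i _ => ?_
      rw [map_pow, map_neg, map_one, neg_pow]
      ring
    have h2 := geom_sum_mul (-X : ℚ[X]) (2 * m + 1)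
    rw [Odd.neg_pow ⟨m, rfl⟩] at h2
    rw [h1]
    linear_combination -h2
  -- now everything is ring algebra modulo hE
  rw [Polynomial.C_neg, mul_add, mul_sub, mul_add, mul_neg, hg, Finset.mul_sum, mul_neg, Finset.mul_sum]
  have hS : ∀ i ∈ Finset.range m, (X + 1 : ℚ[X]) *
      (C (_root_.bernoulli (2 * i + 2) * ((2 * m + 1).choose (2 * i + 2) : ℚ)) *
        (X + 1) ^ (2 * i + 1))
      = C (_root_.bernoulli (2*(i+1)) * ((2*m+1).choose (2*(i+1)) : ℚ)) * (X+1:ℚ[X])^(2*(i+1)) := by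
    intro i _
    rw [show 2 * (i + 1) = 2 * i + 2 by ring]
    ring
  have hT : ∀ i ∈ Finset.range m, (X + 1 : ℚ[X]) *
      (C (_root_.bernoulli (2 * i + 2) * ((2 * m + 1).choose (2 * i + 2) : ℚ)) *
        ((X : ℚ[X]) ^ (2 * m + 1 - (2 * i + 2)) * (X + 1) ^ (2 * i + 1)))
      = C (_root_.bernoulli (2*(i+1)) * ((2*m+1).choose (2*(i+1)) : ℚ)) *
          ((X:ℚ[X])^(2*m+1-2*(i+1)) * (X+1)^(2*(i+1))) := by
    intro i _
    rw [show 2 * (i + 1) = 2 * i + 2 by ring]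
    ring
  rw [Finset.sum_congr rfl hS, Finset.sum_congr rfl hT]
  linear_combination hE



lemma two_sigma (m : ℕ) (hm : 1 ≤ m) :
    2 * ∑ i ∈ Finset.range m,
        _root_.bernoulli (2 * i + 2) * ((2 * m + 1).choose (2 * i + 2) : ℚ) *
          ((2 * i + 1).choose m : ℚ)
      = (-1 : ℚ) ^ (m + 1) := by
  have h := congrArg (fun p : ℚ[X] => p.coeff m) (bern_divided m hm)
  simp only [coeff_add, coeff_sub, coeff_neg, finset_sum_coeff, coeff_C_mul] at h
  rw [Polynomial.coeff_C, if_neg (by omega : ¬ m = 0)] at h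
  have hXadd : ∀ i ∈ Finset.range m,
      _root_.bernoulli (2 * i + 2) * ((2 * m + 1).choose (2 * i + 2) : ℚ) *
          ((X + 1 : ℚ[X]) ^ (2 * i + 1)).coeff m
      = _root_.bernoulli (2 * i + 2) * ((2 * m + 1).choose (2 * i + 2) : ℚ) *
          ((2 * i + 1).choose m : ℚ) := by
    intro i _
    rw [Polynomial.coeff_X_add_one_pow]
  have hXmul : ∀ i ∈ Finset.range m,
      _root_.bernoulli (2 * i + 2) * ((2 * m + 1).choose (2 * i + 2) : ℚ) *
          (((X : ℚ[X]) ^ (2 * m + 1 - (2 * i + 2)) * (X + 1) ^ (2 * i + 1))).coeff m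
      = _root_.bernoulli (2 * i + 2) * ((2 * m + 1).choose (2 * i + 2) : ℚ) *
          ((2 * i + 1).choose m : ℚ) := by
    intro i hi
    have hi' : i < m := Finset.mem_range.mp hi
    congr 1
    rw [mul_comm ((X : ℚ[X]) ^ (2 * m + 1 - (2 * i + 2))), Polynomial.coeff_mul_X_pow']
    split_ifs with hle
    · rw [Polynomial.coeff_X_add_one_pow,
        show m - (2 * m + 1 - (2 * i + 2)) = (2 * i + 1) - m by omega,
        Nat.choose_symm (by omega)]
    · rw [Nat.choose_eq_zero_of_lt (by omega), Nat.cast_zero]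
  rw [Finset.sum_congr rfl hXadd, Finset.sum_congr rfl hXmul] at h
  rw [Polynomial.coeff_X_pow, if_neg (by omega : ¬ m = 2 * m), mul_zero] at h
  have hG : ∑ i ∈ Finset.range (2 * m + 1), (-1 : ℚ) ^ i * ((X : ℚ[X]) ^ i).coeff m
      = (-1 : ℚ) ^ m := by
    rw [Finset.sum_eq_single m]
    · rw [Polynomial.coeff_X_pow, if_pos rfl, mul_one]
    · intro b _ hb
      rw [Polynomial.coeff_X_pow, if_neg (fun hh => hb hh.symm), mul_zero]
    · intro hmem; exact absurd (Finset.mem_range.mpr (by omega)) hmem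
  rw [hG] at h
  rw [pow_succ]
  linarith [h]

end BernoulliRowSum

/-- For all integers `m ≥ 1`,
`Σ_{n=1}^{m} 2 (-1)^{m-n} C(2n-1, m) C(2m+1, 2n) (-1)^{n+1} B_{2n} = 1`. -/
theorem bernoulli_partition_matrix_row_sum :
    ∀ m : ℕ, 1 ≤ m →
      ∑ n ∈ Finset.Icc 1 m,
        (2 * (-1 : ℚ) ^ (m - n) * (Nat.choose (2 * n - 1) m : ℚ) *
          (Nat.choose (2 * m + 1) (2 * n) : ℚ) *
          ((-1 : ℚ) ^ (n + 1) * bernoulli (2 * n))) = 1 := by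
  intro m hm
  rw [← Finset.Ico_add_one_right_eq_Icc, Finset.sum_Ico_eq_sum_range]
  have hcong : ∀ i ∈ Finset.range (m + 1 - 1),
      (2 * (-1 : ℚ) ^ (m - (1 + i)) * (Nat.choose (2 * (1 + i) - 1) m : ℚ) *
          (Nat.choose (2 * m + 1) (2 * (1 + i)) : ℚ) *
          ((-1 : ℚ) ^ ((1 + i) + 1) * bernoulli (2 * (1 + i))))
      = (-1 : ℚ) ^ (m + 1) * (2 *
          (_root_.bernoulli (2 * i + 2) * ((2 * m + 1).choose (2 * i + 2) : ℚ) *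
            ((2 * i + 1).choose m : ℚ))) := by
    intro i hi
    have hi' : i < m := by
      have := Finset.mem_range.mp hi; omega
    rw [show 2 * (1 + i) = 2 * i + 2 by ring, show 2 * i + 2 - 1 = 2 * i + 1 by omega]
    have hsgn : (-1 : ℚ) ^ (m - (1 + i)) * (-1 : ℚ) ^ ((1 + i) + 1) = (-1 : ℚ) ^ (m + 1) := by
      rw [← pow_add, show m - (1 + i) + ((1 + i) + 1) = m + 1 by omega]
    calc 2 * (-1 : ℚ) ^ (m - (1 + i)) * ((2 * i + 1).choose m : ℚ) *
            ((2 * m + 1).choose (2 * i + 2) : ℚ) *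
            ((-1 : ℚ) ^ ((1 + i) + 1) * _root_.bernoulli (2 * i + 2))
        = ((-1 : ℚ) ^ (m - (1 + i)) * (-1 : ℚ) ^ ((1 + i) + 1)) * (2 *
            (_root_.bernoulli (2 * i + 2) * ((2 * m + 1).choose (2 * i + 2) : ℚ) *
              ((2 * i + 1).choose m : ℚ))) := by ring
      _ = (-1 : ℚ) ^ (m + 1) * (2 *
            (_root_.bernoulli (2 * i + 2) * ((2 * m + 1).choose (2 * i + 2) : ℚ) *
              ((2 * i + 1).choose m : ℚ))) := by rw [hsgn]
  rw [Finset.sum_congr rfl hcong, show m + 1 - 1 = m by omega, ← Finset.mul_sum,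
    ← Finset.mul_sum, two_sigma m hm, ← pow_add]
  exact Even.neg_one_pow ⟨m + 1, by ring⟩
end

section
/- For all integers m ≥ 1, the identity Σ_{n=1}^{m} (-1)^{m-n} 4^m C(m, 2(m-n)) (-1)^n E_{2n}(1/2) = 1 holds, where E_{2n}(x) is the Euler polynomial. -/
open Finset FormalMultilinearSeries Polynomial

lemma coeff_zero_of_hasSum_zero {a : ℕ → ℝ}
    (h : ∀ t : ℝ, |t| < 1 → HasSum (fun n => a n * t ^ n) 0) : ∀ n, a n = 0 := by
  set p := ofScalars ℝ a with hp
  have hrad : 1 ≤ p.radius := by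
    apply ENNReal.le_of_forall_nnreal_lt
    intro r hr
    have hr1 : |(r:ℝ)| < 1 := by
      rw [abs_of_nonneg r.coe_nonneg]; exact_mod_cast hr
    have hs := (h r hr1).summable
    have ht : Filter.Tendsto (fun n => ‖p n‖ * (r:ℝ) ^ n) Filter.atTop (nhds 0) := by
      have hn : (fun n => ‖p n‖ * (r:ℝ) ^ n) = fun n => ‖a n * (r:ℝ) ^ n‖ := by
        funext n
        rw [norm_mul, ofScalars_norm, norm_pow, Real.norm_eq_abs (r:ℝ),
          abs_of_nonneg r.coe_nonneg]
      rw [hn]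
      simpa using hs.tendsto_atTop_zero.norm
    exact p.le_radius_of_tendsto ht
  have hball : HasFPowerSeriesOnBall (fun _ : ℝ => (0:ℝ)) p 0 1 := by
    refine ⟨hrad, one_pos, ?_⟩
    intro y hy
    rw [EMetric.mem_ball, edist_zero_right] at hy
    have hy1 : |y| < 1 := by
      rw [← Real.norm_eq_abs]; rw [← ofReal_norm, ENNReal.ofReal_lt_one] at hy; exact hy
    convert h y hy1 using 1
    · rfl
    funext n
    rw [hp, ofScalars_apply_eq]
    simp [mul_comm]
  have hz : p = 0 := (hball.hasFPowerSeriesAt).eq_zero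
  intro n
  have h0 : p n = 0 := by rw [hz]; rfl
  rwa [hp, ofScalars_eq_zero] at h0

lemma coeff_unique {a b : ℕ → ℝ} {g : ℝ → ℝ}
    (ha : ∀ t : ℝ, |t| < 1 → HasSum (fun n => a n * t ^ n) (g t))
    (hb : ∀ t : ℝ, |t| < 1 → HasSum (fun n => b n * t ^ n) (g t)) : ∀ n, a n = b n := by
  have h : ∀ t : ℝ, |t| < 1 → HasSum (fun n => (a n - b n) * t ^ n) 0 := by
    intro t ht
    have := (ha t ht).sub (hb t ht)
    simpa [sub_mul] using this
  intro n
  have := coeff_zero_of_hasSum_zero h n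
  linarith

lemma summable_norm_coeff {a : ℕ → ℝ} {g : ℝ → ℝ}
    (h : ∀ t : ℝ, |t| < 1 → HasSum (fun n => a n * t ^ n) (g t))
    {t : ℝ} (ht : |t| < 1) : Summable fun n => ‖a n * t ^ n‖ := by
  set p := ofScalars ℝ a with hp
  have hrad : 1 ≤ p.radius := by
    apply ENNReal.le_of_forall_nnreal_lt
    intro r hr
    have hr1 : |(r:ℝ)| < 1 := by
      rw [abs_of_nonneg r.coe_nonneg]; exact_mod_cast hr
    have hs := (h r hr1).summable
    have htd : Filter.Tendsto (fun n => ‖p n‖ * (r:ℝ) ^ n) Filter.atTop (nhds 0) := by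
      have hn : (fun n => ‖p n‖ * (r:ℝ) ^ n) = fun n => ‖a n * (r:ℝ) ^ n‖ := by
        funext n
        rw [norm_mul, ofScalars_norm, norm_pow, Real.norm_eq_abs (r:ℝ),
          abs_of_nonneg r.coe_nonneg]
      rw [hn]
      simpa using hs.tendsto_atTop_zero.norm
    exact p.le_radius_of_tendsto htd
  have hlt : (‖t‖₊ : ENNReal) < p.radius := by
    refine lt_of_lt_of_le ?_ hrad
    rw [show ((1:ENNReal)) = ((1:NNReal) : ENNReal) by simp]
    norm_cast

  have := p.summable_norm_mul_pow hlt
  convert this using 1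
  funext n
  rw [norm_mul, ofScalars_norm, norm_pow]
  simp [Real.norm_eq_abs]

lemma sum_range_two_mul (f : ℕ → ℝ) (n : ℕ) :
    ∑ k ∈ range (2*n), f k = ∑ i ∈ range n, f (2*i) + ∑ i ∈ range n, f (2*i+1) := by
  induction n with
  | zero => simp
  | succ n ih =>
    rw [show 2*(n+1) = (2*n)+1+1 by ring, sum_range_succ, sum_range_succ,
      sum_range_succ (fun i => f (2*i)), sum_range_succ (fun i => f (2*i+1)), ih]
    ring

lemma binomB (m i : ℕ) :
    ∑ j ∈ range (m+1), (-1:ℝ)^(m-j) * (m.choose j) * ((2*j).choose i)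
      = if m ≤ i then ((m.choose (i-m) : ℝ) * 2^(2*m-i)) else 0 := by
  have key : ((((X:ℝ[X]) + 1)^2 - 1)^m).coeff i
      = ∑ j ∈ range (m+1), (-1:ℝ)^(m-j) * (m.choose j) * ((2*j).choose i) := by
    rw [sub_pow, finset_sum_coeff]
    apply Finset.sum_congr rfl
    intro j hj
    have hjm : j ≤ m := by simpa [Nat.lt_succ_iff] using hj
    have h1 : ((-1:ℝ[X])^(j+m) * (((X:ℝ[X])+1)^2)^j * (1:ℝ[X])^(m-j) * ((m.choose j : ℕ) : ℝ[X]))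
        = C ((-1:ℝ)^(m-j) * (m.choose j)) * ((X:ℝ[X])+1)^(2*j) := by
      have hC : C ((-1:ℝ)^(m-j) * (m.choose j)) = (-1:ℝ[X])^(m-j) * ((m.choose j : ℕ) : ℝ[X]) := by
        simp [map_mul, map_pow]
      have hpar : (-1:ℝ[X])^(j+m) = (-1:ℝ[X])^(m-j) := by
        have : j + m = (m - j) + 2*j := by omega
        rw [this, pow_add, pow_mul]; simp
      rw [hC, hpar, one_pow, ← pow_mul]
      ring
    rw [h1, coeff_C_mul, coeff_X_add_one_pow]
  have key2 : ((((X:ℝ[X]) + 1)^2 - 1)^m).coeff i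
      = if m ≤ i then ((m.choose (i-m) : ℝ) * 2^(2*m-i)) else 0 := by
    have hfac : (((X:ℝ[X]) + 1)^2 - 1)^m = ((X:ℝ[X]) + C 2)^m * X^m := by
      rw [← mul_pow]
      have : ((X:ℝ[X]) + 1)^2 - 1 = ((X:ℝ[X]) + C 2) * X := by
        have h2 : (C 2 : ℝ[X]) = 2 := by
          rw [show (2:ℝ) = ((2:ℕ):ℝ) by norm_num, C_eq_natCast]; norm_num
        rw [h2]; ring
      rw [this]
    rw [hfac, coeff_mul_X_pow', coeff_X_add_C_pow]
    split_ifs with h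
    · have : m - (i - m) = 2*m - i := by omega
      rw [this, mul_comm]
    · rfl
  rw [← key, key2]

lemma keylemma (v : ℕ → ℝ) (m : ℕ)
    (hW : ∀ j : ℕ, 1 ≤ j →
      ∑ k ∈ range (2*j+1), (((2*j).choose k : ℝ) * (1/2)^k * v (2*j - k)) = 0)
    (hv0 : v 0 = 1) :
    ∑ k ∈ range (m+1), (m.choose k : ℝ) * v (m+k) = (-1/4:ℝ)^m := by
  set W : ℕ → ℝ := fun j => ∑ k ∈ range (2*j+1), (((2*j).choose k : ℝ) * (1/2)^k * v (2*j - k))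
    with hWdef
  -- RHS evaluates
  have hRHS : ∑ j ∈ range (m+1), (m.choose j : ℝ) * (-1/4)^(m-j) * W j = (-1/4)^m := by
    rw [Finset.sum_eq_single 0]
    · simp [hWdef, hv0]
    · intro j _ hj
      simp only [hWdef]
      rw [hW j (Nat.one_le_iff_ne_zero.mpr hj), mul_zero]
    · intro h; exact absurd (Finset.mem_range.mpr (Nat.succ_pos m)) h
  rw [← hRHS]
  -- reflect inner sums
  have hWr : ∀ j : ℕ, W j = ∑ i ∈ range (2*j+1), (((2*j).choose i : ℝ) * (1/2)^(2*j-i) * v i) := by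
    intro j
    rw [hWdef]
    simp only []
    rw [← Finset.sum_range_reflect (fun i => (((2*j).choose i : ℝ) * (1/2)^(2*j-i) * v i)) (2*j+1)]
    apply Finset.sum_congr rfl
    intro k hk
    have hk' : k ≤ 2*j := by simpa [Nat.lt_succ_iff] using hk
    rw [show 2*j+1-1-k = 2*j-k by omega, Nat.choose_symm hk',
      show 2*j - (2*j-k) = k by omega]
  -- extend inner sums
  have hWx : ∀ j ∈ range (m+1), (m.choose j : ℝ) * (-1/4)^(m-j) * W j
      = ∑ i ∈ range (2*m+1), (m.choose j : ℝ) * (-1/4)^(m-j)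
          * (((2*j).choose i : ℝ) * (1/2)^(2*j-i) * v i) := by
    intro j hj
    have hjm : j ≤ m := by simpa [Nat.lt_succ_iff] using hj
    rw [hWr j, Finset.mul_sum]
    apply Finset.sum_subset
    · exact Finset.range_subset_range.mpr (by omega)
    · intro i hi hni
      have : 2*j < i := by
        simp only [Finset.mem_range, Nat.lt_succ_iff] at hi hni
        omega
      rw [Nat.choose_eq_zero_of_lt this]
      simp
  rw [Finset.sum_congr rfl hWx, Finset.sum_comm]
  -- evaluate inner sums over j
  have hinner : ∀ i ∈ range (2*m+1),
      ∑ j ∈ range (m+1), (m.choose j : ℝ) * (-1/4)^(m-j)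
          * (((2*j).choose i : ℝ) * (1/2)^(2*j-i) * v i)
      = (if m ≤ i then ((m.choose (i-m) : ℝ)) else 0) * v i := by
    intro i hi
    have him : i ≤ 2*m := by simpa [Nat.lt_succ_iff] using hi
    have hterm : ∀ j ∈ range (m+1), (m.choose j : ℝ) * (-1/4)^(m-j)
          * (((2*j).choose i : ℝ) * (1/2)^(2*j-i) * v i)
        = (1/2:ℝ)^(2*m-i) * ((-1:ℝ)^(m-j) * (m.choose j) * ((2*j).choose i)) * v i := by
      intro j hj
      have hjm : j ≤ m := by simpa [Nat.lt_succ_iff] using hj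
      rcases le_or_gt i (2*j) with hij | hij
      · have hpow : (-1/4:ℝ)^(m-j) * (1/2)^(2*j-i) = (-1:ℝ)^(m-j) * (1/2:ℝ)^(2*m-i) := by
          rw [show (-1/4:ℝ) = (-1) * (1/2)^2 by norm_num, mul_pow, ← pow_mul, mul_assoc, ← pow_add]
          congr 2
          omega
        calc (m.choose j : ℝ) * (-1/4)^(m-j) * (((2*j).choose i : ℝ) * (1/2)^(2*j-i) * v i)
            = ((-1/4:ℝ)^(m-j) * (1/2)^(2*j-i)) * ((m.choose j : ℝ) * ((2*j).choose i) * v i) := by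
              ring
          _ = _ := by rw [hpow]; ring
      · rw [Nat.choose_eq_zero_of_lt hij]
        simp
    rw [Finset.sum_congr rfl hterm, ← Finset.sum_mul, ← Finset.mul_sum, binomB]
    split_ifs with h
    · rw [show (1/2:ℝ)^(2*m-i) * ((m.choose (i-m) : ℝ) * 2^(2*m-i))
        = ((1/2:ℝ) * 2)^(2*m-i) * (m.choose (i-m) : ℝ) by rw [mul_pow]; ring]
      norm_num
    · simp
  have hsplit : ∑ i ∈ range (2*m+1), (if m ≤ i then ((m.choose (i-m) : ℝ)) else 0) * v i
      = ∑ k ∈ range (m+1), (m.choose k : ℝ) * v (m+k) := by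
    rw [show (2*m+1) = (m + (m+1)) by ring, Finset.sum_range_add]
    have h1 : ∑ i ∈ range m, (if m ≤ i then ((m.choose (i-m) : ℝ)) else 0) * v i = 0 := by
      apply Finset.sum_eq_zero
      intro i hi
      have : ¬ (m ≤ i) := (Finset.mem_range.mp hi).not_ge
      rw [if_neg this, zero_mul]
    rw [h1, zero_add]
    apply Finset.sum_congr rfl
    intro k hk
    rw [if_pos (Nat.le_add_right m k), show m + k - m = k by omega]
  rw [Finset.sum_congr rfl hinner, hsplit]

/-- For all integers `m ≥ 1`,
`Σ_{n=1}^{m} (-1)^{m-n} 4^m C(m, 2(m-n)) (-1)^n E_{2n}(1/2) = 1`,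
where the Euler polynomials `E n x` are characterized by the generating
function `2 e^{xt}/(e^t + 1) = Σ_{n≥0} E_n(x) t^n / n!`. -/
theorem euler_partition_matrix_row_sum
    (E : ℕ → ℝ → ℝ)
    (hE : ∀ x t : ℝ, |t| < 1 →
      HasSum (fun n : ℕ => E n x * t ^ n / (Nat.factorial n : ℝ))
        (2 * Real.exp (x * t) / (Real.exp t + 1))) :
    ∀ m : ℕ, 1 ≤ m →
      ∑ n ∈ Finset.Icc 1 m,
        ((-1 : ℝ) ^ (m - n) * 4 ^ m * (Nat.choose m (2 * (m - n)) : ℝ) *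
          ((-1 : ℝ) ^ n * E (2 * n) (1 / 2))) = 1 := by
  intro m hm
  set v : ℕ → ℝ := fun n => E n (1/2) with hvdef
  set a : ℕ → ℝ := fun n => v n / (n.factorial : ℝ) with hadef
  set b : ℕ → ℝ := fun n => (1/2)^n / (n.factorial : ℝ) with hbdef
  set c : ℕ → ℝ := fun n => ∑ k ∈ Finset.range (n+1), b k * a (n - k) with hcdef
  set F : ℝ → ℝ := fun t => 2 * Real.exp (1/2 * t) / (Real.exp t + 1) with hFdef
  have hfa : ∀ t : ℝ, |t| < 1 → HasSum (fun n => a n * t ^ n) (F t) := by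
    intro t ht
    have h0 := hE (1/2) t ht
    have h1 : (fun n : ℕ => a n * t ^ n)
        = fun n : ℕ => E n (1/2) * t ^ n / (Nat.factorial n : ℝ) := by
      funext n
      simp only [hadef, hvdef]
      rw [div_mul_eq_mul_div]
    rw [h1, hFdef]
    exact h0
  have hFeven : ∀ t : ℝ, F (-t) = F t := by
    intro t
    simp only [hFdef]
    have hs := Real.exp_ne_zero (1/2 * t)
    have h2 : Real.exp t = Real.exp (1/2*t) * Real.exp (1/2*t) := by
      rw [← Real.exp_add]; congr 1; ring
    have h4 : Real.exp (1/2 * -t) = (Real.exp (1/2*t))⁻¹ := by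
      rw [show (1:ℝ)/2 * -t = -(1/2*t) by ring, Real.exp_neg]
    have h3 : Real.exp (-t) = (Real.exp (1/2*t) * Real.exp (1/2*t))⁻¹ := by
      rw [Real.exp_neg, h2]
    rw [h2, h3, h4]
    have hp : (0:ℝ) < Real.exp (1/2*t) := Real.exp_pos _
    field_simp
    ring
  have hcoefodd : ∀ n, a n - a n * (-1:ℝ)^n = 0 := by
    have hb' : ∀ t : ℝ, |t| < 1 → HasSum (fun n => (a n * (-1:ℝ)^n) * t ^ n) (F t) := by
      intro t ht
      have ht' : |(-t)| < 1 := by rwa [abs_neg]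
      have h2 := hfa (-t) ht'
      rw [hFeven t] at h2
      have h1 : (fun n => (a n * (-1:ℝ)^n) * t ^ n) = fun n => a n * (-t) ^ n := by
        funext n; rw [neg_pow]; ring
      rw [h1]; exact h2
    intro n
    have := coeff_unique (g := F) hfa hb' n
    linarith
  have hodd : ∀ k, v (2*k+1) = 0 := by
    intro k
    have h := hcoefodd (2*k+1)
    have hneg : (-1:ℝ)^(2*k+1) = -1 := Odd.neg_one_pow ⟨k, by ring⟩
    rw [hneg] at h
    have ha0 : a (2*k+1) = 0 := by linarith
    have hv : v (2*k+1) = a (2*k+1) * (((2*k+1).factorial : ℕ) : ℝ) := by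
      simp only [hadef]
      field_simp
    rw [hv, ha0, zero_mul]
  have hfb : ∀ t : ℝ, HasSum (fun n => b n * t ^ n) (Real.exp (1/2 * t)) := by
    intro t
    have h0 := NormedSpace.expSeries_div_hasSum_exp ((1:ℝ)/2 * t)
    rw [← Real.exp_eq_exp_ℝ] at h0
    have h1 : (fun n => b n * t ^ n) = fun n : ℕ => ((1:ℝ)/2 * t) ^ n / (Nat.factorial n : ℝ) := by
      funext n
      simp only [hbdef]
      rw [div_mul_eq_mul_div, ← mul_pow]
    rw [h1]
    exact h0
  have hb_norm : ∀ t : ℝ, Summable fun n => ‖b n * t ^ n‖ := by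
    intro t
    refine ((hfb |t|).summable).congr fun n => ?_
    rw [norm_mul, Real.norm_eq_abs, Real.norm_eq_abs, abs_pow]
    rw [abs_of_nonneg (show (0:ℝ) ≤ b n by simp only [hbdef]; positivity)]
  have hc : ∀ t : ℝ, |t| < 1 → HasSum (fun n => c n * t ^ n) (Real.exp (1/2*t) * F t) := by
    intro t ht
    have ha_norm := summable_norm_coeff hfa ht
    have hbn := hb_norm t
    have hsum := summable_norm_sum_mul_range_of_summable_norm hbn ha_norm
    have htsum := tsum_mul_tsum_eq_tsum_sum_range_of_summable_norm hbn ha_norm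
    have hhs := hsum.of_norm.hasSum
    rw [← htsum, (hfb t).tsum_eq, (hfa t ht).tsum_eq] at hhs
    have h1 : (fun n => c n * t ^ n)
        = fun n => ∑ k ∈ Finset.range (n+1), (b k * t^k) * (a (n-k) * t^(n-k)) := by
      funext n
      simp only [hcdef]
      rw [Finset.sum_mul]
      apply Finset.sum_congr rfl
      intro k hk
      have hkn : k ≤ n := Nat.lt_succ_iff.mp (Finset.mem_range.mp hk)
      have hts : t ^ n = t^k * t^(n-k) := by rw [← pow_add]; congr 1; omega
      rw [hts]; ring
    rw [h1]
    exact hhs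
  have hG : ∀ t : ℝ, Real.exp (1/2*t) * F t + Real.exp (1/2 * -t) * F (-t) = 2 := by
    intro t
    simp only [hFdef]
    have hs := Real.exp_ne_zero (1/2 * t)
    have h2 : Real.exp t = Real.exp (1/2*t) * Real.exp (1/2*t) := by
      rw [← Real.exp_add]; congr 1; ring
    have h4 : Real.exp (1/2 * -t) = (Real.exp (1/2*t))⁻¹ := by
      rw [show (1:ℝ)/2 * -t = -(1/2*t) by ring, Real.exp_neg]
    have h3 : Real.exp (-t) = (Real.exp (1/2*t) * Real.exp (1/2*t))⁻¹ := by
      rw [Real.exp_neg, h2]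
    rw [h2, h3, h4]
    have hp : (0:ℝ) < Real.exp (1/2*t) := Real.exp_pos _
    field_simp
    ring
  have hck : ∀ n, c n + c n * (-1:ℝ)^n = (if n = 0 then (2:ℝ) else 0) := by
    have hA : ∀ t : ℝ, |t| < 1 →
        HasSum (fun n => (c n + c n * (-1:ℝ)^n) * t ^ n) ((fun _ : ℝ => (2:ℝ)) t) := by
      intro t ht
      have h1 := hc t ht
      have ht' : |(-t)| < 1 := by rwa [abs_neg]
      have h2 := hc (-t) ht'
      have h2' : HasSum (fun n => (c n * (-1:ℝ)^n) * t ^ n) (Real.exp (1/2 * -t) * F (-t)) := by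
        have heq : (fun n => (c n * (-1:ℝ)^n) * t ^ n) = fun n => c n * (-t) ^ n := by
          funext n; rw [neg_pow]; ring
        rw [heq]; exact h2
      have h3 := h1.add h2'
      rw [hG t] at h3
      have heq2 : (fun n => (c n + c n * (-1:ℝ)^n) * t ^ n)
          = fun n => c n * t^n + (c n * (-1:ℝ)^n) * t^n := by
        funext n; ring
      rw [heq2]; exact h3
    have hB : ∀ t : ℝ, |t| < 1 →
        HasSum (fun n : ℕ => (if n = 0 then (2:ℝ) else 0) * t ^ n) ((fun _ : ℝ => (2:ℝ)) t) := by
      intro t ht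
      have h0 := hasSum_ite_eq (0:ℕ) (2:ℝ)
      have heq : (fun n : ℕ => (if n = 0 then (2:ℝ) else 0) * t ^ n)
          = fun n : ℕ => if n = 0 then (2:ℝ) else 0 := by
        funext n; by_cases h : n = 0 <;> simp [h]
      rw [heq]; exact h0
    exact coeff_unique hA hB
  have hc0 : c 0 = 1 := by
    have h := hck 0
    norm_num at h
    linarith
  have hcev : ∀ j, 1 ≤ j → c (2*j) = 0 := by
    intro j hj
    have h := hck (2*j)
    rw [if_neg (by omega), pow_mul] at h
    norm_num at h
    exact h
  have hv0 : v 0 = 1 := by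
    have h : c 0 = v 0 := by
      simp only [hcdef, Finset.range_one, Finset.sum_singleton, hbdef, hadef]
      norm_num
    rw [← h, hc0]
  have hu : ∀ n, (n.factorial : ℝ) * c n
      = ∑ k ∈ Finset.range (n+1), ((n.choose k : ℝ) * (1/2)^k * v (n-k)) := by
    intro n
    simp only [hcdef]
    rw [Finset.mul_sum]
    apply Finset.sum_congr rfl
    intro k hk
    have hkn : k ≤ n := Nat.lt_succ_iff.mp (Finset.mem_range.mp hk)
    have hfac : ((n.choose k : ℝ)) * (k.factorial : ℝ) * ((n-k).factorial : ℝ)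
        = (n.factorial : ℝ) := by
      exact_mod_cast Nat.choose_mul_factorial_mul_factorial hkn
    have hk0 : (k.factorial : ℝ) ≠ 0 := Nat.cast_ne_zero.mpr (Nat.factorial_ne_zero k)
    have hnk0 : ((n-k).factorial : ℝ) ≠ 0 := Nat.cast_ne_zero.mpr (Nat.factorial_ne_zero _)
    simp only [hbdef, hadef]
    field_simp
    linear_combination (-v (n-k)) * hfac
  have hW : ∀ j : ℕ, 1 ≤ j →
      ∑ k ∈ range (2*j+1), (((2*j).choose k : ℝ) * (1/2)^k * v (2*j - k)) = 0 := by
    intro j hj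
    rw [← hu (2*j), hcev j hj, mul_zero]
  have hkey := keylemma v m hW hv0
  -- master sum manipulations
  have hmaster : ∑ k ∈ Finset.range (2*(m+1)), ((m.choose k : ℝ)) * v (2*m - k)
      = ∑ k ∈ Finset.range (m+1), (m.choose k : ℝ) * v (m+k) := by
    have hshrink : ∑ k ∈ Finset.range (2*(m+1)), ((m.choose k : ℝ)) * v (2*m - k)
        = ∑ k ∈ Finset.range (m+1), ((m.choose k : ℝ)) * v (2*m - k) := by
      symm
      apply Finset.sum_subset (Finset.range_subset_range.mpr (by omega))
      intro i hi hni
      have hlt : m < i := by simp only [Finset.mem_range] at hi hni; omega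
      rw [Nat.choose_eq_zero_of_lt hlt]
      simp
    rw [hshrink,
      ← Finset.sum_range_reflect (fun k => ((m.choose k : ℝ)) * v (2*m - k)) (m+1)]
    apply Finset.sum_congr rfl
    intro k hk
    have hkm : k ≤ m := Nat.lt_succ_iff.mp (Finset.mem_range.mp hk)
    rw [show m+1-1-k = m - k by omega, Nat.choose_symm hkm,
      show 2*m - (m - k) = m + k by omega]
  have hsplit2 : ∑ k ∈ Finset.range (2*(m+1)), ((m.choose k : ℝ)) * v (2*m - k)
      = ∑ j ∈ Finset.range (m+1), ((m.choose (2*j) : ℝ)) * v (2*(m - j)) := by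
    rw [sum_range_two_mul (fun k => ((m.choose k : ℝ)) * v (2*m - k)) (m+1)]
    have hoddpart : ∑ i ∈ Finset.range (m+1),
        ((m.choose (2*i+1) : ℝ)) * v (2*m - (2*i+1)) = 0 := by
      apply Finset.sum_eq_zero
      intro i hi
      rcases le_or_gt (2*i+1) m with hle | hlt
      · rw [show 2*m - (2*i+1) = 2*(m-i-1)+1 by omega, hodd (m-i-1), mul_zero]
      · rw [Nat.choose_eq_zero_of_lt hlt]; simp
    rw [hoddpart, add_zero]
    apply Finset.sum_congr rfl
    intro i hi
    rw [show 2*m - 2*i = 2*(m-i) by omega]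
  -- final assembly
  have hstep1 : ∀ n ∈ Finset.Icc 1 m,
      ((-1 : ℝ) ^ (m - n) * 4 ^ m * (Nat.choose m (2 * (m - n)) : ℝ) *
          ((-1 : ℝ) ^ n * E (2 * n) (1 / 2)))
      = ((-4:ℝ))^m * ((m.choose (2*(m-n)) : ℝ) * v (2*n)) := by
    intro n hn
    obtain ⟨hn1, hn2⟩ := Finset.mem_Icc.mp hn
    have hpow : (-1:ℝ)^(m-n) * (-1:ℝ)^n = (-1:ℝ)^m := by
      rw [← pow_add]; congr 1; omega
    have hv : E (2*n) (1/2) = v (2*n) := rfl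
    have hneg4 : (-4:ℝ)^m = (-1:ℝ)^m * 4^m := by
      rw [show (-4:ℝ) = (-1) * 4 by norm_num, mul_pow]
    rw [hv, hneg4]
    calc (-1:ℝ)^(m-n) * 4^m * (m.choose (2*(m-n)) : ℝ) * ((-1:ℝ)^n * v (2*n))
        = ((-1:ℝ)^(m-n) * (-1:ℝ)^n) * 4^m * ((m.choose (2*(m-n)) : ℝ) * v (2*n)) := by ring
      _ = (-1:ℝ)^m * 4^m * ((m.choose (2*(m-n)) : ℝ) * v (2*n)) := by rw [hpow]
      _ = _ := by ring
  rw [Finset.sum_congr rfl hstep1, ← Finset.mul_sum]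
  have hIcc : ∑ n ∈ Finset.range (m+1), ((m.choose (2*(m-n)) : ℝ) * v (2*n))
      = ∑ n ∈ Finset.Icc 1 m, ((m.choose (2*(m-n)) : ℝ) * v (2*n)) := by
    rw [Finset.range_eq_Ico, Finset.sum_eq_sum_Ico_succ_bot (Nat.succ_pos m)]
    rw [show m - 0 = m from rfl, Nat.choose_eq_zero_of_lt (by omega : m < 2*m)]
    rw [show Finset.Ico 1 (m+1) = Finset.Icc 1 m from Finset.Ico_add_one_right_eq_Icc 1 m]
    simp
  have hrefl : ∑ n ∈ Finset.range (m+1), ((m.choose (2*(m-n)) : ℝ) * v (2*n))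
      = ∑ j ∈ Finset.range (m+1), ((m.choose (2*j) : ℝ) * v (2*(m-j))) := by
    rw [← Finset.sum_range_reflect (fun n => ((m.choose (2*(m-n)) : ℝ) * v (2*n))) (m+1)]
    apply Finset.sum_congr rfl
    intro j hj
    have hjm : j ≤ m := Nat.lt_succ_iff.mp (Finset.mem_range.mp hj)
    rw [show m+1-1-j = m-j by omega, show m - (m-j) = j by omega]
  have hX : ∑ n ∈ Finset.Icc 1 m, ((m.choose (2*(m-n)) : ℝ) * v (2*n)) = (-1/4:ℝ)^m := by
    rw [← hIcc, hrefl, ← hsplit2, hmaster]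
    exact hkey
  rw [hX, ← mul_pow]
  norm_num
end

section
/- For all integers m ≥ 2, the Bernoulli numbers satisfy the recursion B_{2m} = (−1/((m+1)(2m+1))) Σ_{j=m−⌊m/2⌋}^{m−1} C(m+1, 2m−2j+1) (1+2j) B_{2j}. -/
section Kaneko

open Polynomial Finset

/-- The Bernoulli functional: `L(Σ aₖ Xᵏ) = Σ aₖ Bₖ`. -/
noncomputable def BL : Polynomial ℚ →ₗ[ℚ] ℚ :=
  Polynomial.lsum fun n => LinearMap.toSpanSingleton ℚ ℚ (_root_.bernoulli n)

lemma BL_apply (p : Polynomial ℚ) : BL p = p.sum fun n a => a * _root_.bernoulli n := by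
  unfold BL
  rw [Polynomial.lsum_apply]
  simp_rw [LinearMap.toSpanSingleton_apply, smul_eq_mul]

lemma BL_monomial (k : ℕ) (a : ℚ) : BL (Polynomial.monomial k a) = a * _root_.bernoulli k := by
  rw [BL_apply]
  exact Polynomial.sum_monomial_index a _ (by simp)

lemma BL_eq (p : Polynomial ℚ) (N : ℕ) (h : p.natDegree < N) :
    BL p = ∑ i ∈ range N, p.coeff i * _root_.bernoulli i := by
  rw [BL_apply]
  exact Polynomial.sum_over_range' p (by simp) N h

lemma bernoulli_neg_one_pow (k : ℕ) :
    (-1 : ℚ) ^ k * _root_.bernoulli k = _root_.bernoulli k + if k = 1 then 1 else 0 := by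
  rcases Nat.even_or_odd k with hk | hk
  · have : k ≠ 1 := by rintro rfl; simp at hk
    simp [hk.neg_one_pow, this]
  · rcases eq_or_ne k 1 with rfl | h1
    · norm_num
    · have hz : _root_.bernoulli k = 0 := by
        rw [bernoulli_eq_bernoulli'_of_ne_one h1]
        have hk2 := Nat.odd_iff.mp hk
        exact bernoulli'_eq_zero_of_odd hk (by omega)
      simp [hz, h1]

lemma BL_C_mul_X_add_one_pow (a : ℚ) (k : ℕ) :
    BL (C a * ((X : Polynomial ℚ) + 1) ^ k) =
      a * (_root_.bernoulli k + if k = 1 then 1 else 0) := by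
  have hd1 : ((X : Polynomial ℚ) + 1).natDegree ≤ 1 := by
    simpa using natDegree_add_le (X : Polynomial ℚ) 1
  have hdeg : (C a * ((X : Polynomial ℚ) + 1) ^ k).natDegree < k + 1 := by
    apply Nat.lt_succ_of_le
    refine (natDegree_C_mul_le _ _).trans ?_
    refine (natDegree_pow_le).trans ?_
    calc k * ((X : Polynomial ℚ) + 1).natDegree ≤ k * 1 := Nat.mul_le_mul_left k hd1
      _ = k := mul_one k
  rw [BL_eq _ (k + 1) hdeg]
  have hcoeff : ∀ i, (C a * ((X : Polynomial ℚ) + 1) ^ k).coeff i = a * (k.choose i : ℚ) := by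
    intro i
    rw [coeff_C_mul, coeff_X_add_one_pow]
  simp_rw [hcoeff, mul_assoc, ← Finset.mul_sum]
  rw [Finset.sum_range_succ, _root_.sum_bernoulli, Nat.choose_self]
  split_ifs <;> push_cast <;> ring

/-- Shift lemma: `L(p(X+1)) = L(p) + p'(0)`. -/
lemma BL_comp_X_add_one (p : Polynomial ℚ) :
    BL (p.comp ((X : Polynomial ℚ) + 1)) = BL p + p.coeff 1 := by
  induction p using Polynomial.induction_on' with
  | add p q hp hq => rw [add_comp, map_add, hp, hq, map_add, coeff_add]; ring
  | monomial k a =>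
    rw [monomial_comp, BL_C_mul_X_add_one_pow, BL_monomial, coeff_monomial]
    split_ifs <;> ring

/-- Parity lemma: `L(p(-X)) = L(p) + p'(0)`. -/
lemma BL_comp_neg_X (p : Polynomial ℚ) :
    BL (p.comp (-(X : Polynomial ℚ))) = BL p + p.coeff 1 := by
  induction p using Polynomial.induction_on' with
  | add p q hp hq => rw [add_comp, map_add, hp, hq, map_add, coeff_add]; ring
  | monomial k a =>
    have hmc : (Polynomial.monomial k a).comp (-(X : Polynomial ℚ)) =
        Polynomial.monomial k (a * (-1) ^ k) := by
      rw [monomial_comp, neg_pow, ← C_1, ← C_neg, ← C_pow, ← mul_assoc, ← C_mul,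
        C_mul_X_pow_eq_monomial]
    rw [hmc, BL_monomial, BL_monomial, coeff_monomial]
    have h2 : a * ((-1 : ℚ) ^ k * _root_.bernoulli k)
        = a * (_root_.bernoulli k + if k = 1 then 1 else 0) := by
      rw [bernoulli_neg_one_pow]
    split_ifs at h2 ⊢ with h1
    · linear_combination h2
    · linear_combination h2

/-- `L((X(X+1))ⁿ(2X+1)) = 0`. -/
lemma BL_kaneko_poly (n : ℕ) :
    BL (((X : Polynomial ℚ) * (X + 1)) ^ n * (2 * X + 1)) = 0 := by
  set p : Polynomial ℚ := ((X : Polynomial ℚ) * (X + 1)) ^ n * (2 * X + 1) with hp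
  set q : Polynomial ℚ := p.comp ((X : Polynomial ℚ) - 1) with hq
  have hqc : q.comp ((X : Polynomial ℚ) + 1) = p := by
    rw [hq, comp_assoc]
    simp [sub_comp, X_comp, one_comp]
  have hneg : p.comp (-(X : Polynomial ℚ)) = -q := by
    rw [hq, hp]
    simp only [mul_comp, pow_comp, add_comp, sub_comp, X_comp, one_comp, ofNat_comp]
    ring
  have hc : q.coeff 1 = p.coeff 1 := by
    have key : ∀ r : Polynomial ℚ, r.coeff 1 = r.derivative.eval 0 := by
      intro r
      rw [← Polynomial.coeff_zero_eq_eval_zero, Polynomial.coeff_derivative]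
      push_cast; ring
    have hd := congrArg (fun r : Polynomial ℚ => r.derivative.eval 0) hneg
    simp only [hq, derivative_comp, derivative_neg, derivative_X, eval_mul, eval_neg, eval_one,
      eval_comp, eval_X, neg_zero, derivative_sub, derivative_one, sub_zero, eval_sub,
      zero_sub, one_mul, neg_mul, neg_neg, eval_zero] at hd
    rw [key, key, hq, derivative_comp]
    simp only [derivative_sub, derivative_X, derivative_one, sub_zero, one_mul, eval_comp,
      eval_sub, eval_X, eval_one, zero_sub, eval_zero]
    linarith [hd]
  have h1 : BL p = BL q + q.coeff 1 := by rw [← hqc, BL_comp_X_add_one]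
  have h2 : BL p + p.coeff 1 = -(BL q) := by
    rw [← BL_comp_neg_X, hneg, map_neg]
  rw [hc] at h1
  linarith [h1, h2]

/-- Kaneko's recurrence. -/
lemma kaneko (n : ℕ) :
    ∑ i ∈ Finset.range (n + 2),
      ((n + 1).choose i : ℚ) * ((n : ℚ) + 1 + i) * _root_.bernoulli (n + i) = 0 := by
  have h1 : (X : Polynomial ℚ) ^ (n + 1) * (X + 1) ^ (n + 1) =
      ∑ i ∈ range (n + 2), Polynomial.monomial (n + 1 + i) (((n + 1).choose i : ℚ)) := by
    rw [add_pow, Finset.mul_sum]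
    refine Finset.sum_congr rfl fun i hi => ?_
    rw [one_pow, mul_one, ← C_mul_X_pow_eq_monomial, C_eq_natCast]
    ring
  have hL : derivative ((X : Polynomial ℚ) ^ (n + 1) * (X + 1) ^ (n + 1)) =
      ((n : ℚ) + 1) • (((X : Polynomial ℚ) * (X + 1)) ^ n * (2 * X + 1)) := by
    rw [derivative_mul, derivative_X_pow, derivative_pow, derivative_add, derivative_X,
      derivative_one, add_zero, smul_eq_C_mul, mul_pow]
    simp only [Nat.add_sub_cancel]
    push_cast
    ring
  have hR : derivative ((X : Polynomial ℚ) ^ (n + 1) * (X + 1) ^ (n + 1)) =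
      ∑ i ∈ range (n + 2),
        Polynomial.monomial (n + i) (((n + 1).choose i : ℚ) * ((n : ℚ) + 1 + i)) := by
    rw [h1, derivative_sum]
    refine Finset.sum_congr rfl fun i hi => ?_
    rw [derivative_monomial, show n + 1 + i - 1 = n + i from by omega]
    congr 1
    push_cast; ring
  have hPQ := hL.symm.trans hR
  have hBL := congrArg BL hPQ
  rw [map_smul, BL_kaneko_poly, smul_zero, map_sum] at hBL
  simp_rw [BL_monomial] at hBL
  rw [← hBL]

end Kaneko

/-- Bernoulli recursion: for all integers `m ≥ 2`,
`B_{2m} = (−1/((m+1)(2m+1))) Σ_{j=m−⌊m/2⌋}^{m−1} C(m+1, 2m−2j+1) (1+2j) B_{2j}`. -/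
theorem bernoulli_recursion :
    ∀ m : ℕ, 2 ≤ m →
      bernoulli (2 * m) =
        (-1 / (((m : ℚ) + 1) * (2 * (m : ℚ) + 1))) *
          ∑ j ∈ Finset.Icc (m - m / 2) (m - 1),
            (Nat.choose (m + 1) (2 * m - 2 * j + 1) : ℚ) * (1 + 2 * (j : ℚ)) *
              bernoulli (2 * j) := by
  intro m hm
  have hk := kaneko m
  -- restrict to even-index terms
  have hfilter :
      ∑ i ∈ (Finset.range (m + 2)).filter (fun i => (m + i) % 2 = 0),
          ((m + 1).choose i : ℚ) * ((m : ℚ) + 1 + i) * bernoulli (m + i)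
        = ∑ i ∈ Finset.range (m + 2),
            ((m + 1).choose i : ℚ) * ((m : ℚ) + 1 + i) * bernoulli (m + i) := by
    refine Finset.sum_filter_of_ne fun i hi hne => ?_
    by_contra hodd
    have hodd' : Odd (m + i) := Nat.odd_iff.mpr (by omega)
    have hz : bernoulli (m + i) = 0 := by
      rw [bernoulli_eq_bernoulli'_of_ne_one (by omega)]
      exact bernoulli'_eq_zero_of_odd hodd' (by omega)
    exact hne (by rw [hz, mul_zero])
  -- reindex: i = 2j - m
  have hbij :
      ∑ j ∈ Finset.Icc (m - m / 2) m,
          (Nat.choose (m + 1) (2 * m - 2 * j + 1) : ℚ) * (1 + 2 * (j : ℚ)) * bernoulli (2 * j)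
        = ∑ i ∈ (Finset.range (m + 2)).filter (fun i => (m + i) % 2 = 0),
            ((m + 1).choose i : ℚ) * ((m : ℚ) + 1 + i) * bernoulli (m + i) := by
    refine Finset.sum_nbij' (fun j => 2 * j - m) (fun i => (m + i) / 2) ?_ ?_ ?_ ?_ ?_
    · intro j hj
      simp only [Finset.mem_Icc] at hj
      simp only [Finset.mem_filter, Finset.mem_range]
      omega
    · intro i hi
      simp only [Finset.mem_filter, Finset.mem_range] at hi
      simp only [Finset.mem_Icc]
      omega
    · intro j hj
      simp only [Finset.mem_Icc] at hj
      show (m + (2 * j - m)) / 2 = j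
      omega
    · intro i hi
      simp only [Finset.mem_filter, Finset.mem_range] at hi
      show 2 * ((m + i) / 2) - m = i
      omega
    · intro j hj
      simp only [Finset.mem_Icc] at hj
      have h1 : m ≤ 2 * j := by omega
      have h2 : m + (2 * j - m) = 2 * j := by omega
      have h3 : (m + 1).choose (2 * m - 2 * j + 1) = (m + 1).choose (2 * j - m) := by
        rw [show 2 * m - 2 * j + 1 = (m + 1) - (2 * j - m) from by omega,
          Nat.choose_symm (by omega)]
      rw [h2, h3, Nat.cast_sub h1]
      push_cast
      ring
  rw [hfilter, hk] at hbij
  -- split off the top term j = m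
  have htop := Finset.sum_Icc_succ_top (a := m - m / 2) (b := m - 1) (by omega)
    (fun j => (Nat.choose (m + 1) (2 * m - 2 * j + 1) : ℚ) * (1 + 2 * (j : ℚ)) *
      bernoulli (2 * j))
  rw [show m - 1 + 1 = m from by omega] at htop
  rw [htop] at hbij
  have hcm : (Nat.choose (m + 1) (2 * m - 2 * m + 1) : ℚ) = (m : ℚ) + 1 := by
    rw [show 2 * m - 2 * m + 1 = 1 from by omega, Nat.choose_one_right]
    push_cast; ring
  rw [hcm] at hbij
  have hne : (((m : ℚ) + 1) * (2 * (m : ℚ) + 1)) ≠ 0 := by positivity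
  field_simp
  nlinarith [hbij]
end

section
/- For every integer n ≥ 2, the first subdiagonal entry of the inverse Bernoulli-partition matrix is b(n, n−1) = (1/6)(n−2) n!(n−1)!/(2n−1)!. -/
open Real Filter Set Topology

lemma lim_sinh_div : Tendsto (fun t : ℝ => Real.sinh t / t) (𝓝[>] 0) (𝓝 1) := by
  have h := Real.hasDerivAt_sinh 0
  rw [hasDerivAt_iff_tendsto_slope] at h
  have h2 : Tendsto (slope Real.sinh 0) (𝓝[>] (0:ℝ)) (𝓝 (Real.cosh 0)) :=
    h.mono_left (nhdsWithin_mono 0 (fun t ht => ht.ne'))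
  simpa [slope_fun_def, Real.sinh_zero, div_eq_inv_mul] using h2

lemma lim_div_sinh : Tendsto (fun t : ℝ => t / Real.sinh t) (𝓝[>] 0) (𝓝 1) := by
  have h := lim_sinh_div.inv₀ one_ne_zero
  rw [inv_one] at h
  simpa [inv_div] using h

lemma cosh_sub_one (t : ℝ) : Real.cosh t - 1 = 2 * Real.sinh (t/2) ^ 2 := by
  have h : Real.cosh t = Real.cosh (2 * (t/2)) := by ring_nf
  rw [h, Real.cosh_two_mul, Real.cosh_sq]; ring

lemma half_tendsto : Tendsto (fun t : ℝ => t/2) (𝓝[>] (0:ℝ)) (𝓝[>] (0:ℝ)) := by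
  rw [tendsto_nhdsWithin_iff]
  constructor
  · simpa using (((continuous_id (X:=ℝ)).div_const 2).tendsto 0).mono_left nhdsWithin_le_nhds
  · filter_upwards [self_mem_nhdsWithin] with t ht
    exact mem_Ioi.mpr (div_pos (mem_Ioi.mp ht) two_pos)

lemma lim_cosh : Tendsto (fun t : ℝ => (Real.cosh t - 1) / t^2) (𝓝[>] 0) (𝓝 (1/2)) := by
  have h1 := lim_sinh_div.comp half_tendsto
  have h2 := (h1.mul h1).const_mul (1/2 : ℝ)
  have h3 : (1/2 : ℝ) * (1 * 1) = 1/2 := by norm_num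
  rw [h3] at h2
  refine h2.congr' ?_
  filter_upwards [self_mem_nhdsWithin] with t ht
  have ht' : t ≠ 0 := ht.ne'
  simp only [Function.comp]
  rw [cosh_sub_one]
  field_simp

lemma lim_cube : Tendsto (fun t : ℝ => (t - Real.sinh t) / t^3) (𝓝[>] 0) (𝓝 (-(1/6))) := by
  have hff' : ∀ t ∈ Ioo (0:ℝ) 1, HasDerivAt (fun t : ℝ => t - Real.sinh t) (1 - Real.cosh t) t :=
    fun t _ => (hasDerivAt_id t).sub (Real.hasDerivAt_sinh t)
  have hgg' : ∀ t ∈ Ioo (0:ℝ) 1, HasDerivAt (fun t : ℝ => t^3) (3 * t^2) t := by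
    intro t _
    simpa using hasDerivAt_pow 3 t
  have hg' : ∀ t ∈ Ioo (0:ℝ) 1, 3 * t^2 ≠ 0 := by
    intro t ht
    have := ht.1
    positivity
  have hfa : Tendsto (fun t : ℝ => t - Real.sinh t) (𝓝[>] (0:ℝ)) (𝓝 0) := by
    exact ((continuous_id.sub Real.continuous_sinh).tendsto' 0 0 (by simp)).mono_left nhdsWithin_le_nhds
  have hga : Tendsto (fun t : ℝ => t^3) (𝓝[>] (0:ℝ)) (𝓝 0) := by
    simpa using ((continuous_pow 3).tendsto (0:ℝ)).mono_left nhdsWithin_le_nhds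
  have hdiv : Tendsto (fun t : ℝ => (1 - Real.cosh t) / (3 * t^2)) (𝓝[>] (0:ℝ)) (𝓝 (-(1/6))) := by
    have h := lim_cosh.const_mul (-(1/3) : ℝ)
    have h3 : (-(1/3) : ℝ) * (1/2) = -(1/6) := by norm_num
    rw [h3] at h
    refine h.congr' ?_
    filter_upwards [self_mem_nhdsWithin] with t ht
    have ht' : t ≠ 0 := ht.ne'
    field_simp
    ring
  exact HasDerivAt.lhopital_zero_right_on_Ioo one_pos hff' hgg' hg' hfa hga hdiv

lemma sqrt_four : Real.sqrt 4 = 2 := by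
  rw [show (4:ℝ) = 2^2 by norm_num, Real.sqrt_sq (by norm_num : (0:ℝ) ≤ 2)]

lemma s_tendsto (x : ℝ) (hx : 0 < x) :
    Tendsto (fun y : ℝ => x/2 * Real.sqrt y) (𝓝[>] (0:ℝ)) (𝓝[>] (0:ℝ)) := by
  rw [tendsto_nhdsWithin_iff]
  constructor
  · have hc : Continuous fun y : ℝ => x/2 * Real.sqrt y :=
      continuous_const.mul Real.continuous_sqrt
    simpa using (hc.tendsto 0).mono_left nhdsWithin_le_nhds
  · filter_upwards [self_mem_nhdsWithin] with y hy
    exact mul_pos (by positivity) (Real.sqrt_pos.mpr hy)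

lemma limit1 (x : ℝ) (hx : 0 < x) :
    Tendsto (fun y : ℝ => x * Real.sqrt y / 2 *
      (Real.cosh (x/2 * Real.sqrt (y+4)) - Real.cosh (x/2 * Real.sqrt y)) /
      Real.sinh (x/2 * Real.sqrt y)) (𝓝[>] 0) (𝓝 (Real.cosh x - 1)) := by
  have hP := lim_div_sinh.comp (s_tendsto x hx)
  have hB1 : Tendsto (fun y : ℝ => Real.cosh (x/2 * Real.sqrt (y+4))) (𝓝[>] (0:ℝ))
      (𝓝 (Real.cosh x)) := by
    have hc : Continuous fun y : ℝ => Real.cosh (x/2 * Real.sqrt (y+4)) :=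
      Real.continuous_cosh.comp (continuous_const.mul
        (Real.continuous_sqrt.comp (continuous_id.add continuous_const)))
    have := (hc.tendsto 0).mono_left (nhdsWithin_le_nhds (s := Set.Ioi (0:ℝ)))
    simpa [sqrt_four] using this
  have hB2 : Tendsto (fun y : ℝ => Real.cosh (x/2 * Real.sqrt y)) (𝓝[>] (0:ℝ)) (𝓝 1) := by
    have hc : Continuous fun y : ℝ => Real.cosh (x/2 * Real.sqrt y) :=
      Real.continuous_cosh.comp (continuous_const.mul Real.continuous_sqrt)
    have := (hc.tendsto 0).mono_left (nhdsWithin_le_nhds (s := Set.Ioi (0:ℝ)))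
    simpa using this
  have h := hP.mul (hB1.sub hB2)
  rw [one_mul] at h
  refine h.congr ?_
  intro y
  simp only [Function.comp]
  ring

lemma limit2 (x : ℝ) (hx : 0 < x) :
    Tendsto (fun y : ℝ => (x * Real.sqrt y / 2 *
      (Real.cosh (x/2 * Real.sqrt (y+4)) - Real.cosh (x/2 * Real.sqrt y)) /
      Real.sinh (x/2 * Real.sqrt y) - (Real.cosh x - 1)) / y) (𝓝[>] 0)
      (𝓝 (x * Real.sinh x / 8 - x^2/8 - x^2 * (Real.cosh x - 1) / 24)) := by
  have hs := s_tendsto x hx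
  have hP := lim_div_sinh.comp hs
  -- derivative term
  have hA1 : Tendsto (fun y : ℝ => (Real.cosh (x/2 * Real.sqrt (y+4)) - Real.cosh x) / y)
      (𝓝[>] (0:ℝ)) (𝓝 (Real.sinh x * (x/8))) := by
    have h1 : HasDerivAt (fun y : ℝ => y + 4) 1 0 := (hasDerivAt_id 0).add_const 4
    have h2 : HasDerivAt (fun y : ℝ => Real.sqrt (y + 4)) (1/(2*Real.sqrt (0+4)) * 1) 0 :=
      (hasDerivAt_sqrt (by norm_num : ((0:ℝ)+4) ≠ 0)).comp 0 h1
    have h3 : HasDerivAt (fun y : ℝ => x/2 * Real.sqrt (y + 4))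
        (x/2 * (1/(2*Real.sqrt (0+4)) * 1)) 0 := h2.const_mul (x/2)
    have h4 : HasDerivAt (fun y : ℝ => Real.cosh (x/2 * Real.sqrt (y + 4)))
        (Real.sinh (x/2 * Real.sqrt (0+4)) * (x/2 * (1/(2*Real.sqrt (0+4)) * 1))) 0 :=
      (Real.hasDerivAt_cosh _).comp 0 h3
    have hval : Real.sinh (x/2 * Real.sqrt (0+4)) * (x/2 * (1/(2*Real.sqrt (0+4)) * 1))
        = Real.sinh x * (x/8) := by
      rw [show ((0:ℝ)+4) = 4 by norm_num, sqrt_four]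
      ring_nf
    rw [hval] at h4
    rw [hasDerivAt_iff_tendsto_slope] at h4
    have h5 : Tendsto (slope (fun y : ℝ => Real.cosh (x/2 * Real.sqrt (y + 4))) 0)
        (𝓝[>] (0:ℝ)) (𝓝 (Real.sinh x * (x/8))) :=
      h4.mono_left (nhdsWithin_mono 0 (fun t ht => ht.ne'))
    refine h5.congr' ?_
    filter_upwards [self_mem_nhdsWithin] with y hy
    have e1 : x/2 * Real.sqrt (0+4) = x := by
      rw [show ((0:ℝ)+4) = 4 by norm_num, sqrt_four]; ring
    rw [slope_def_field, e1, sub_zero]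
  have hA2 : Tendsto (fun y : ℝ => (Real.cosh (x/2 * Real.sqrt y) - 1) / y)
      (𝓝[>] (0:ℝ)) (𝓝 (x^2/8)) := by
    have h := (lim_cosh.comp hs).const_mul (x^2/4 : ℝ)
    have hval : (x^2/4 : ℝ) * (1/2) = x^2/8 := by ring
    rw [hval] at h
    refine h.congr' ?_
    filter_upwards [self_mem_nhdsWithin] with y hy
    simp only [Function.comp]
    have hsq : (x/2 * Real.sqrt y)^2 = x^2/4 * y := by
      rw [mul_pow, Real.sq_sqrt hy.le]; ring
    rw [hsq]
    have hy' : y ≠ 0 := hy.ne'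
    field_simp
  have hPterm : Tendsto (fun y : ℝ =>
      (x/2 * Real.sqrt y - Real.sinh (x/2 * Real.sqrt y)) / (Real.sinh (x/2 * Real.sqrt y) * y))
      (𝓝[>] (0:ℝ)) (𝓝 (-(x^2/24))) := by
    have h := ((lim_cube.comp hs).mul hP).const_mul (x^2/4 : ℝ)
    have hval : (x^2/4 : ℝ) * (-(1/6) * 1) = -(x^2/24) := by ring
    rw [hval] at h
    refine h.congr' ?_
    filter_upwards [self_mem_nhdsWithin] with y hy
    simp only [Function.comp]
    have hsy : (0:ℝ) < x/2 * Real.sqrt y := mul_pos (by positivity) (Real.sqrt_pos.mpr hy)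
    set s := x/2 * Real.sqrt y with hsdef
    set σ := Real.sinh s with hσdef
    have hsinh : σ ≠ 0 := (Real.sinh_pos_iff.mpr hsy).ne'
    have hsq : s^2 = x^2/4 * y := by
      rw [hsdef, mul_pow, Real.sq_sqrt hy.le]; ring
    have hy' : y ≠ 0 := hy.ne'
    have hs0 : s ≠ 0 := hsy.ne'
    have hx4 : x^2/4 = s^2/y := by rw [hsq]; field_simp
    rw [hx4]
    field_simp
  have h := (hP.mul (hA1.sub hA2)).add (hPterm.mul (tendsto_const_nhds (x := Real.cosh x - 1)))
  have hval : (1 : ℝ) * (Real.sinh x * (x/8) - x^2/8) + -(x^2/24) * (Real.cosh x - 1)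
      = x * Real.sinh x / 8 - x^2/8 - x^2 * (Real.cosh x - 1) / 24 := by ring
  rw [hval] at h
  refine h.congr' ?_
  filter_upwards [self_mem_nhdsWithin] with y hy
  simp only [Function.comp]
  have hsy : (0:ℝ) < x/2 * Real.sqrt y := mul_pos (by positivity) (Real.sqrt_pos.mpr hy)
  set u := Real.sqrt y with hudef
  set σ := Real.sinh (x/2*u) with hσdef
  set c1 := Real.cosh (x/2 * Real.sqrt (y+4)) with hc1def
  set c2 := Real.cosh (x/2*u) with hc2def
  have hsinh : σ ≠ 0 := (Real.sinh_pos_iff.mpr hsy).ne'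
  have hy' : y ≠ 0 := hy.ne'
  field_simp
  ring

lemma tendsto_coeffs {a : ℕ → ℝ} {S : ℝ → ℝ} {δ : ℝ} (hδ : 0 < δ)
    (h : ∀ y : ℝ, y ∈ Set.Ioo 0 δ → HasSum (fun k => a k * y ^ k) (S y)) :
    Tendsto S (𝓝[>] 0) (𝓝 (a 0)) ∧
      Tendsto (fun y => (S y - a 0) / y) (𝓝[>] 0) (𝓝 (a 1)) := by
  obtain ⟨y₀, hy₀mem, hy₀lt⟩ : ∃ y₀, y₀ ∈ Set.Ioo (0:ℝ) δ ∧ y₀ < δ :=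
    ⟨δ/2, ⟨by positivity, by linarith⟩, by linarith⟩
  have hy₀pos : 0 < y₀ := hy₀mem.1
  have hsum := (h y₀ hy₀mem).summable
  have habs : Summable (fun k => |a k * y₀ ^ k|) := hsum.abs
  set C := ∑' k, |a k * y₀ ^ k| with hCdef
  have hC : ∀ k, |a k * y₀ ^ k| ≤ C := fun k => Summable.le_tsum habs k (fun _ _ => abs_nonneg _)
  have hC0 : 0 ≤ C := le_trans (abs_nonneg _) (hC 0)
  set K := 2 * C / y₀ ^ 2 with hKdef
  have hK0 : 0 ≤ K := div_nonneg (by linarith) (sq_nonneg _)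
  have key : ∀ y ∈ Set.Ioo 0 (y₀/2), |S y - a 0 - a 1 * y| ≤ K * y ^ 2 := by
    intro y hy
    have hyδ : y ∈ Set.Ioo 0 δ := ⟨hy.1, by have h1 := hy.2; linarith⟩
    have hsy := h y hyδ
    have hshift : HasSum (fun k => a (k + 2) * y ^ (k + 2))
        (S y - ∑ i ∈ Finset.range 2, a i * y ^ i) := (hasSum_nat_add_iff' 2).mpr hsy
    have hrange : ∑ i ∈ Finset.range 2, a i * y ^ i = a 0 + a 1 * y := by
      simp [Finset.sum_range_succ]
    rw [hrange] at hshift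
    have hq1 : (0:ℝ) ≤ y / y₀ := div_nonneg hy.1.le hy₀pos.le
    have hq2 : y / y₀ ≤ 1/2 := by
      rw [div_le_iff₀ hy₀pos]; have := hy.2; linarith
    have hb : ∀ k : ℕ, |a (k + 2) * y ^ (k + 2)| ≤ (C * y ^ 2 / y₀ ^ 2) * (1/2 : ℝ) ^ k := by
      intro k
      have hy₀p : (y₀:ℝ) ^ (k+2) ≠ 0 := by positivity
      have h1 : |a (k + 2) * y ^ (k + 2)| = |a (k + 2) * y₀ ^ (k + 2)| * (y / y₀) ^ (k + 2) := by
        rw [abs_mul, abs_mul, abs_pow, abs_pow, abs_of_pos hy.1, abs_of_pos hy₀pos, div_pow]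
        field_simp
        try ring
      rw [h1]
      have h2 : (y / y₀) ^ (k + 2) ≤ (y / y₀) ^ 2 * (1/2 : ℝ) ^ k := by
        rw [pow_add, mul_comm]
        gcongr
        try exact pow_le_pow_left hq1 hq2 k
      calc |a (k + 2) * y₀ ^ (k + 2)| * (y / y₀) ^ (k + 2)
          ≤ C * ((y / y₀) ^ 2 * (1/2 : ℝ) ^ k) := by
            apply mul_le_mul (hC _) h2 (by positivity) hC0
        _ = (C * y ^ 2 / y₀ ^ 2) * (1/2 : ℝ) ^ k := by
            rw [div_pow]; ring
    have hgeom : Summable (fun k : ℕ => (C * y ^ 2 / y₀ ^ 2) * (1/2 : ℝ) ^ k) :=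
      (summable_geometric_of_lt_one (by norm_num) (by norm_num)).mul_left _
    have habs2 : Summable (fun k => |a (k + 2) * y ^ (k + 2)|) := hshift.summable.abs
    have h3 : |S y - (a 0 + a 1 * y)| ≤ ∑' k, |a (k + 2) * y ^ (k + 2)| := by
      rw [← hshift.tsum_eq, ← Real.norm_eq_abs]
      simpa [Real.norm_eq_abs, abs_mul, abs_pow] using
        norm_tsum_le_tsum_norm (f := fun k => a (k + 2) * y ^ (k + 2))
          (by simpa [Real.norm_eq_abs, abs_mul, abs_pow] using habs2)
    have h4 : ∑' k, |a (k + 2) * y ^ (k + 2)| ≤ ∑' k : ℕ, (C * y ^ 2 / y₀ ^ 2) * (1/2 : ℝ) ^ k :=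
      Summable.tsum_le_tsum hb habs2 hgeom
    have h5 : ∑' k : ℕ, (C * y ^ 2 / y₀ ^ 2) * (1/2 : ℝ) ^ k = (C * y ^ 2 / y₀ ^ 2) * 2 := by
      rw [tsum_mul_left, tsum_geometric_of_lt_one (by norm_num) (by norm_num)]
      norm_num
    have h6 : |S y - a 0 - a 1 * y| ≤ (C * y ^ 2 / y₀ ^ 2) * 2 := by
      rw [show S y - a 0 - a 1 * y = S y - (a 0 + a 1 * y) by ring]
      exact le_trans h3 (le_trans h4 (le_of_eq h5))
    calc |S y - a 0 - a 1 * y| ≤ (C * y ^ 2 / y₀ ^ 2) * 2 := h6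
      _ = K * y ^ 2 := by rw [hKdef]; ring
  have hmem : Set.Ioo (0:ℝ) (y₀/2) ∈ 𝓝[>] (0:ℝ) :=
    Ioo_mem_nhdsGT (half_pos hy₀pos)
  constructor
  · have h1 : Tendsto (fun y : ℝ => S y - a 0) (𝓝[>] 0) (𝓝 0) := by
      have hg : Tendsto (fun y : ℝ => |a 1| * y + K * y ^ 2) (𝓝[>] (0:ℝ)) (𝓝 0) := by
        have hc : Continuous fun y : ℝ => |a 1| * y + K * y ^ 2 := by continuity
        simpa using (hc.tendsto 0).mono_left nhdsWithin_le_nhds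
      refine squeeze_zero_norm' ?_ hg
      filter_upwards [hmem] with y hy
      have := key y hy
      rw [Real.norm_eq_abs]
      calc |S y - a 0| = |(S y - a 0 - a 1 * y) + a 1 * y| := by ring_nf
        _ ≤ |S y - a 0 - a 1 * y| + |a 1 * y| := abs_add_le _ _
        _ ≤ K * y ^ 2 + |a 1| * y := by
            rw [abs_mul, abs_of_pos hy.1]; linarith
        _ = |a 1| * y + K * y ^ 2 := by ring
    have := h1.add (tendsto_const_nhds (x := a 0))
    simpa using this
  · have h1 : Tendsto (fun y : ℝ => (S y - a 0) / y - a 1) (𝓝[>] 0) (𝓝 0) := by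
      have hg : Tendsto (fun y : ℝ => K * y) (𝓝[>] (0:ℝ)) (𝓝 0) := by
        have hc : Continuous fun y : ℝ => K * y := by continuity
        simpa using (hc.tendsto 0).mono_left nhdsWithin_le_nhds
      refine squeeze_zero_norm' ?_ hg
      filter_upwards [hmem] with y hy
      have hk := key y hy
      have hy' : y ≠ 0 := hy.1.ne'
      rw [Real.norm_eq_abs]
      have he : (S y - a 0) / y - a 1 = (S y - a 0 - a 1 * y) / y := by field_simp
      rw [he, abs_div, abs_of_pos hy.1, div_le_iff₀ hy.1]
      calc |S y - a 0 - a 1 * y| ≤ K * y ^ 2 := hk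
        _ = K * y * y := by ring
    have := h1.add (tendsto_const_nhds (x := a 1))
    simpa using this

lemma coeffs_eq_zero {δ : ℝ} (hδ : 0 < δ) :
    ∀ (k : ℕ) (a : ℕ → ℝ), (∀ y ∈ Set.Ioo (0:ℝ) δ, HasSum (fun k => a k * y ^ k) (0:ℝ)) →
      a k = 0 := by
  have base : ∀ (a : ℕ → ℝ), (∀ y ∈ Set.Ioo (0:ℝ) δ, HasSum (fun k => a k * y ^ k) (0:ℝ)) →
      a 0 = 0 := by
    intro a h
    have h0 := (tendsto_coeffs hδ (S := fun _ => 0) h).1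
    exact (tendsto_nhds_unique h0 tendsto_const_nhds)
  intro k
  induction k with
  | zero => exact base
  | succ k ih =>
    intro a h
    have h0 : a 0 = 0 := base a h
    apply ih (fun j => a (j + 1))
    intro y hy
    have hshift : HasSum (fun j => a (j + 1) * y ^ (j + 1))
        ((0:ℝ) - ∑ i ∈ Finset.range 1, a i * y ^ i) := (hasSum_nat_add_iff' 1).mpr (h y hy)
    have : ((0:ℝ) - ∑ i ∈ Finset.range 1, a i * y ^ i) = 0 := by simp [h0]
    rw [this] at hshift
    have hy' : y ≠ 0 := hy.1.ne'
    have := hshift.mul_right y⁻¹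
    rw [zero_mul] at this
    have heq : (fun j => a (j + 1) * y ^ (j + 1) * y⁻¹) = fun j => a (j + 1) * y ^ j := by
      funext j
      rw [pow_succ]
      field_simp
      try ring
    rwa [heq] at this

/-- `b(n,k) = (-1)^{n-k} A^{(n)}_{n-k} (k!)² / (2k+1)!`. -/
noncomputable def bcoef (A : ℕ → ℕ → ℝ) (n k : ℕ) : ℝ :=
  (-1 : ℝ) ^ (n - k) * A n (n - k) * (Nat.factorial k : ℝ) ^ 2 /
    (Nat.factorial (2 * k + 1) : ℝ)

set_option maxHeartbeats 1600000 in
/-- For every integer `n ≥ 2`, `b(n, n−1) = (1/6)(n−2) n!(n−1)!/(2n−1)!`. -/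
theorem b_first_subdiagonal
    (A : ℕ → ℕ → ℝ)
    (hA0 : ∀ n k : ℕ, n ≤ k → A n k = 0)
    (hA : ∀ x y : ℝ, |x| < 1 → 0 < y → y < 1 →
      HasSum (fun p : ℕ × ℕ =>
        x ^ (2 * (p.1 + 1)) / (Nat.factorial (2 * (p.1 + 1)) : ℝ) *
          A (p.1 + 1) p.2 * y ^ p.2)
        ((x * Real.sqrt y / 2) *
          (Real.cosh (x / 2 * Real.sqrt (y + 4)) - Real.cosh (x / 2 * Real.sqrt y)) /
          Real.sinh (x / 2 * Real.sqrt y))) :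
    ∀ n : ℕ, 2 ≤ n →
      bcoef A n (n - 1) =
        (1 / 6) * ((n : ℝ) - 2) * (Nat.factorial n : ℝ) *
          (Nat.factorial (n - 1) : ℝ) / (Nat.factorial (2 * n - 1) : ℝ) := by
  -- Step 1: summability of each column series
  have hsummable : ∀ x : ℝ, x ∈ Set.Ioo (0:ℝ) 1 → ∀ k : ℕ,
      Summable (fun m : ℕ =>
        x ^ (2*(m+1)) / ((Nat.factorial (2*(m+1)) : ℝ)) * A (m+1) k) := by
    intro x hx k
    have habs : |x| < 1 := by rw [abs_of_pos hx.1]; exact hx.2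
    have h := (hA x (1/2) habs (by norm_num) (by norm_num)).summable
    have hinj : Function.Injective (fun m : ℕ => ((m, k) : ℕ × ℕ)) := by
      intro a b hab
      simpa using congrArg Prod.fst hab
    have hslice := h.comp_injective hinj
    have h2 := hslice.mul_right (((1/2:ℝ)^k)⁻¹)
    refine h2.congr ?_
    intro m
    simp only [Function.comp]
    rw [mul_inv_cancel_right₀ (pow_ne_zero _ (by norm_num : (1/2:ℝ) ≠ 0))]
  -- Step 2: for each x, y the row series in powers of y
  have hrow : ∀ x ∈ Set.Ioo (0:ℝ) 1, ∀ y ∈ Set.Ioo (0:ℝ) 1,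
      HasSum (fun k : ℕ =>
        (∑' m : ℕ, x ^ (2*(m+1)) / ((Nat.factorial (2*(m+1)) : ℝ)) * A (m+1) k) * y ^ k)
        (x * Real.sqrt y / 2 *
          (Real.cosh (x/2 * Real.sqrt (y+4)) - Real.cosh (x/2 * Real.sqrt y)) /
          Real.sinh (x/2 * Real.sqrt y)) := by
    intro x hx y hy
    have habs : |x| < 1 := by rw [abs_of_pos hx.1]; exact hx.2
    have h := hA x y habs hy.1 hy.2
    have hswap : HasSum (fun q : ℕ × ℕ =>
        x ^ (2*(q.2+1)) / ((Nat.factorial (2*(q.2+1)) : ℝ)) * A (q.2+1) q.1 * y ^ q.1)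
        (x * Real.sqrt y / 2 *
          (Real.cosh (x/2 * Real.sqrt (y+4)) - Real.cosh (x/2 * Real.sqrt y)) /
          Real.sinh (x/2 * Real.sqrt y)) :=
      ((Equiv.prodComm ℕ ℕ).hasSum_iff).mpr h
    exact hswap.prod_fiberwise (fun k => (hsummable x hx k).hasSum.mul_right (y^k))
  -- Step 3: identify the first two coefficients
  have hrho : ∀ x ∈ Set.Ioo (0:ℝ) 1,
      (∑' m : ℕ, x ^ (2*(m+1)) / ((Nat.factorial (2*(m+1)) : ℝ)) * A (m+1) 1)
        = x * Real.sinh x / 8 - x^2/8 - x^2 * (Real.cosh x - 1) / 24 := by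
    intro x hx
    have hTC := tendsto_coeffs (δ := 1) one_pos
      (a := fun k : ℕ => ∑' m : ℕ, x ^ (2*(m+1)) / ((Nat.factorial (2*(m+1)) : ℝ)) * A (m+1) k)
      (S := fun y : ℝ => x * Real.sqrt y / 2 *
        (Real.cosh (x/2 * Real.sqrt (y+4)) - Real.cosh (x/2 * Real.sqrt y)) /
        Real.sinh (x/2 * Real.sqrt y))
      (fun y hy => hrow x hx y hy)
    have h0 := tendsto_nhds_unique hTC.1 (limit1 x hx.1)
    have h1 := hTC.2
    rw [h0] at h1
    exact tendsto_nhds_unique h1 (limit2 x hx.1)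
  -- Step 4: coefficient extraction
  set d : ℕ → ℝ := fun k => 1/(8*((Nat.factorial (2*k+1)) : ℝ)) -
      (if k = 0 then (1:ℝ)/8 else 0) -
      (if k = 0 then 0 else 1/(24*((Nat.factorial (2*k)) : ℝ))) with hd
  have hhyp : ∀ t ∈ Set.Ioo (0:ℝ) 1, HasSum
      (fun k : ℕ => (A (k+1) 1 / ((Nat.factorial (2*(k+1))) : ℝ) - d k) * t ^ k) 0 := by
    intro t ht
    set x := Real.sqrt t with hxdef
    have hxpos : 0 < x := Real.sqrt_pos.mpr ht.1
    have hxlt : x < 1 := by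
      rw [hxdef, show (1:ℝ) = Real.sqrt 1 by simp]
      exact Real.sqrt_lt_sqrt ht.1.le ht.2
    have hx : x ∈ Set.Ioo (0:ℝ) 1 := ⟨hxpos, hxlt⟩
    have hx2 : x ^ 2 = t := Real.sq_sqrt ht.1.le
    have hxp : ∀ m : ℕ, x ^ (2*(m+1)) = t ^ (m+1) := by
      intro m
      rw [pow_mul, hx2]
    -- LHS series
    have hL : HasSum (fun m : ℕ => (A (m+1) 1 / ((Nat.factorial (2*(m+1))) : ℝ)) * t ^ (m+1))
        (x * Real.sinh x / 8 - x^2/8 - x^2 * (Real.cosh x - 1) / 24) := by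
      have h := (hsummable x hx 1).hasSum
      rw [hrho x hx] at h
      have heq : (fun m : ℕ => x ^ (2*(m+1)) / ((Nat.factorial (2*(m+1)) : ℝ)) * A (m+1) 1)
          = fun m : ℕ => (A (m+1) 1 / ((Nat.factorial (2*(m+1))) : ℝ)) * t ^ (m+1) := by
        funext m
        rw [← hxp m]
        ring
      rwa [heq] at h
    -- RHS series, three pieces
    have p1 : HasSum (fun m : ℕ => (1/(8*((Nat.factorial (2*m+1)) : ℝ))) * t ^ (m+1))
        (x * Real.sinh x / 8) := by
      have h := (Real.hasSum_sinh x).mul_left (x/8)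
      have heq : (fun m : ℕ => x/8 * (x ^ (2*m+1) / ((Nat.factorial (2*m+1)) : ℝ)))
          = fun m : ℕ => (1/(8*((Nat.factorial (2*m+1)) : ℝ))) * t ^ (m+1) := by
        funext m
        have hxx : x * x ^ (2*m+1) = t ^ (m+1) := by
          rw [← pow_succ']
          rw [show 2*m+1+1 = 2*(m+1) from by omega, hxp m]
        rw [show x/8 * (x ^ (2*m+1) / ((Nat.factorial (2*m+1)) : ℝ))
            = (x * x ^ (2*m+1)) * (1/(8*((Nat.factorial (2*m+1)) : ℝ))) from by ring, hxx]
        ring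
      rw [heq] at h
      rwa [show x/8 * Real.sinh x = x * Real.sinh x / 8 by ring] at h
    have p2 : HasSum (fun m : ℕ => (if m = 0 then (1:ℝ)/8 else 0) * t ^ (m+1)) (t/8) := by
      have h := hasSum_ite_eq (0:ℕ) (t/8)
      have heq : (fun m : ℕ => if m = 0 then t/8 else 0)
          = fun m : ℕ => (if m = 0 then (1:ℝ)/8 else 0) * t ^ (m+1) := by
        funext m
        by_cases hm : m = 0
        · subst hm; simp; ring
        · simp [hm]
      rwa [heq] at h
    have p3 : HasSum (fun m : ℕ => (if m = 0 then 0 else 1/(24*((Nat.factorial (2*m)) : ℝ))) * t ^ (m+1))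
        (t * (Real.cosh x - 1) / 24) := by
      have h := (Real.hasSum_cosh x).mul_left (t/24)
      have hsh := (hasSum_nat_add_iff' (f := fun n : ℕ => t/24 * (x ^ (2*n) / ((Nat.factorial (2*n)) : ℝ))) 1).mpr h
      have hval : t/24 * Real.cosh x - ∑ i ∈ Finset.range 1, t/24 * (x ^ (2*i) / ((Nat.factorial (2*i)) : ℝ))
          = t * (Real.cosh x - 1) / 24 := by
        simp [Finset.sum_range_one]
        ring
      rw [hval] at hsh
      -- now reindex: add back the zero-th term
      set f : ℕ → ℝ := fun m => (if m = 0 then 0 else 1/(24*((Nat.factorial (2*m)) : ℝ))) * t ^ (m+1) with hf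
      have hshift : HasSum (fun n => f (n+1)) (t * (Real.cosh x - 1) / 24) := by
        have heq : (fun n : ℕ => t/24 * (x ^ (2*(n+1)) / ((Nat.factorial (2*(n+1))) : ℝ)))
            = fun n => f (n+1) := by
          funext n
          rw [hf]
          simp only [Nat.succ_ne_zero, if_false]
          rw [hxp n]
          ring
        rwa [heq] at hsh
      have h2 := (hasSum_nat_add_iff (f := f) 1).mp hshift
      have hz : t * (Real.cosh x - 1) / 24 + ∑ i ∈ Finset.range 1, f i
          = t * (Real.cosh x - 1) / 24 := by
        rw [hf]; simp
      rwa [hz] at h2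
    -- combine
    have hR : HasSum (fun m : ℕ => d m * t ^ (m+1))
        (x * Real.sinh x / 8 - x^2/8 - x^2 * (Real.cosh x - 1) / 24) := by
      have h := (p1.sub p2).sub p3
      have hval : x * Real.sinh x / 8 - t/8 - t * (Real.cosh x - 1) / 24
          = x * Real.sinh x / 8 - x^2/8 - x^2 * (Real.cosh x - 1) / 24 := by
        rw [hx2]
      rw [hval] at h
      have heq : (fun m : ℕ => (1/(8*((Nat.factorial (2*m+1)) : ℝ))) * t ^ (m+1)
            - (if m = 0 then (1:ℝ)/8 else 0) * t ^ (m+1)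
            - (if m = 0 then 0 else 1/(24*((Nat.factorial (2*m)) : ℝ))) * t ^ (m+1))
          = fun m : ℕ => d m * t ^ (m+1) := by
        funext m
        rw [hd]
        ring
      rwa [heq] at h
    -- subtract
    have hsub := hL.sub hR
    rw [sub_self] at hsub
    have heq : (fun m : ℕ => (A (m+1) 1 / ((Nat.factorial (2*(m+1))) : ℝ)) * t ^ (m+1)
          - d m * t ^ (m+1))
        = fun m : ℕ => ((A (m+1) 1 / ((Nat.factorial (2*(m+1))) : ℝ) - d m) * t ^ (m+1)) := by
      funext m
      rw [hd]
      ring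
    rw [heq] at hsub
    -- divide by t
    have ht0 : t ≠ 0 := ht.1.ne'
    have h3 := hsub.mul_right t⁻¹
    rw [zero_mul] at h3
    have heq2 : (fun m : ℕ => (A (m+1) 1 / ((Nat.factorial (2*(m+1))) : ℝ) - d m) * t ^ (m+1) * t⁻¹)
        = fun m : ℕ => (A (m+1) 1 / ((Nat.factorial (2*(m+1))) : ℝ) - d m) * t ^ m := by
      funext m
      rw [pow_succ]
      field_simp
      try ring
    rwa [heq2] at h3
  -- extract coefficients
  have hDzero : ∀ k : ℕ, A (k+1) 1 / ((Nat.factorial (2*(k+1))) : ℝ) - d k = 0 := fun k =>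
    coeffs_eq_zero one_pos k _ hhyp
  -- Step 5: final computation
  intro n hn
  have hm : n - 1 + 1 = n := by omega
  have hD := hDzero (n - 1)
  rw [hm] at hD
  have hne : ¬ (n - 1 = 0) := by omega
  have e1 : 2*(n-1)+1 = 2*n-1 := by omega
  have e2 : 2*(n-1) = 2*n-2 := by omega
  simp only [hd, if_neg hne, sub_zero] at hD
  rw [e1, e2] at hD
  -- hD : A n 1 / (2n)! - (1/(8*(2n-1)!) - 0 - 1/(24*(2n-2)!)) = 0
  have hfac1 : ((Nat.factorial (2*n)) : ℝ) = (2*(n:ℝ)) * ((Nat.factorial (2*n-1)) : ℝ) := by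
    have h : Nat.factorial (2*n) = (2*n) * Nat.factorial (2*n-1) := by
      conv_lhs => rw [show 2*n = (2*n-1)+1 from by omega]
      rw [Nat.factorial_succ, show (2*n-1)+1 = 2*n from by omega]
    rw [h]
    push_cast
    ring
  have hfac2 : ((Nat.factorial (2*n-1)) : ℝ) = ((2*n-1 : ℕ) : ℝ) * ((Nat.factorial (2*n-2)) : ℝ) := by
    have h : Nat.factorial (2*n-1) = (2*n-1) * Nat.factorial (2*n-2) := by
      conv_lhs => rw [show 2*n-1 = (2*n-2)+1 from by omega]
      rw [Nat.factorial_succ, show (2*n-2)+1 = 2*n-1 from by omega]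
    rw [h]
    push_cast
    ring
  have hfacn : ((Nat.factorial n) : ℝ) = (n : ℝ) * ((Nat.factorial (n-1)) : ℝ) := by
    have h : Nat.factorial n = n * Nat.factorial (n-1) := by
      conv_lhs => rw [show n = (n-1)+1 from by omega]
      rw [Nat.factorial_succ, show (n-1)+1 = n from by omega]
    rw [h]
    push_cast
    ring
  have hAval : A n 1 = -((n:ℝ) * ((n:ℝ) - 2)) / 6 := by
    have hsub := sub_eq_zero.mp hD
    have hf2n : ((Nat.factorial (2*n)) : ℝ) ≠ 0 := Nat.cast_ne_zero.mpr (Nat.factorial_ne_zero _)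
    have hf2n1 : ((Nat.factorial (2*n-1)) : ℝ) ≠ 0 := Nat.cast_ne_zero.mpr (Nat.factorial_ne_zero _)
    have hf2n2 : ((Nat.factorial (2*n-2)) : ℝ) ≠ 0 := Nat.cast_ne_zero.mpr (Nat.factorial_ne_zero _)
    have hcast : ((2*n-1 : ℕ) : ℝ) = 2*(n:ℝ) - 1 := by
      have : (2*n-1 : ℕ) + 1 = 2*n := by omega
      have h' := congrArg (Nat.cast (R := ℝ)) this
      push_cast at h'
      linarith
    rw [div_eq_iff hf2n] at hsub
    have hn2 : (2:ℝ) ≤ (n:ℝ) := by exact_mod_cast hn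
    have hne1 : (2*(n:ℝ) - 1) ≠ 0 := ne_of_gt (by linarith)
    rw [hsub, hfac1, hfac2, hcast]
    field_simp
    ring
  -- final formula
  have hn1 : n - (n-1) = 1 := by omega
  have h2k : 2*(n-1)+1 = 2*n-1 := by omega
  rw [bcoef, hn1, h2k, hAval, hfacn]
  have hcast : ((2*n-1 : ℕ) : ℝ) = 2*(n:ℝ) - 1 := by
    have : (2*n-1 : ℕ) + 1 = 2*n := by omega
    have h' := congrArg (Nat.cast (R := ℝ)) this
    push_cast at h'
    linarith
  have hf2n1 : ((Nat.factorial (2*n-1)) : ℝ) ≠ 0 := Nat.cast_ne_zero.mpr (Nat.factorial_ne_zero _)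
  field_simp
end

section
/- For every integer n ≥ 3, the second subdiagonal entry of the inverse Bernoulli-partition matrix is b(n, n−2) = (7/360)(n−3)(n − 8/7) n!(n−2)!/(2n−3)!. -/
open Filter Topology Finset Polynomial
open scoped NNReal ENNReal

lemma keyzero (w : ℕ → ℝ)
    (h : ∀ t : ℝ, t ∈ Set.Ioo (0:ℝ) 1 → HasSum (fun n => w n * t ^ n) 0) :
    ∀ n, w n = 0 := by
  set p := FormalMultilinearSeries.ofScalars ℝ w with hp
  have hs : Summable (fun n => ‖p n‖ * ((1/2 : ℝ≥0) : ℝ) ^ n) := by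
    have h2 : Summable (fun n => ‖w n * (1/2:ℝ) ^ n‖) :=
      summable_norm_iff.mpr (h (1/2) (by norm_num)).summable
    apply h2.congr
    intro n
    rw [hp, FormalMultilinearSeries.ofScalars_norm]
    norm_num [norm_mul, norm_pow]
  have hrad : (0:ℝ≥0∞) < p.radius :=
    lt_of_lt_of_le (by norm_num) (p.le_radius_of_summable_norm hs)
  have hb := p.hasFPowerSeriesOnBall hrad
  have hsum0 : ∀ t ∈ Set.Ioo (0:ℝ) 1, p.sum t = 0 := by
    intro t ht
    have : p.sum t = ∑' n, w n * t ^ n := by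
      rw [hp]
      simpa [smul_eq_mul, FormalMultilinearSeries.ofScalarsSum] using
        FormalMultilinearSeries.ofScalars_sum_eq w t
    rw [this, (h t ht).tsum_eq]
  have hu : Tendsto (fun k : ℕ => (1:ℝ)/(k+2)) atTop (𝓝[≠] 0) := by
    rw [tendsto_nhdsWithin_iff]
    constructor
    · have h1 : Tendsto (fun n : ℕ => (1:ℝ)/(↑(n+1)+1)) atTop (𝓝 0) :=
        tendsto_one_div_add_atTop_nhds_zero_nat.comp (tendsto_add_atTop_nat 1)
      exact h1.congr (fun n => by push_cast; ring_nf)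
    · filter_upwards with k
      simp only [Set.mem_compl_iff, Set.mem_singleton_iff]
      exact ne_of_gt (by positivity)
  have hfreq : ∃ᶠ z in 𝓝[≠] (0:ℝ), p.sum z = 0 := by
    apply hu.frequently
    apply Frequently.of_forall
    intro k
    apply hsum0
    constructor
    · positivity
    · rw [div_lt_one (by positivity)]
      linarith [Nat.cast_nonneg (α := ℝ) k]
  have heq0 : ∀ᶠ z in 𝓝 (0:ℝ), p.sum z = 0 :=
    (hb.hasFPowerSeriesAt.analyticAt.frequently_zero_iff_eventually_zero).mp hfreq
  have hp0 : p = 0 := (hb.hasFPowerSeriesAt.locally_zero_iff).mp heq0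
  have := (FormalMultilinearSeries.ofScalars_series_eq_zero (𝕜 := ℝ) ℝ).mp hp0
  intro n; exact congrFun this n

set_option maxHeartbeats 1000000 in
lemma master (A : ℕ → ℕ → ℝ)
    (hA0 : ∀ n k : ℕ, n ≤ k → A n k = 0)
    (hA : ∀ x y : ℝ, |x| < 1 → 0 < y → y < 1 →
      HasSum (fun p : ℕ × ℕ =>
        x ^ (2 * (p.1 + 1)) / (Nat.factorial (2 * (p.1 + 1)) : ℝ) *
          A (p.1 + 1) p.2 * y ^ p.2)
        ((x * Real.sqrt y / 2) *
          (Real.cosh (x / 2 * Real.sqrt (y + 4)) - Real.cosh (x / 2 * Real.sqrt y)) /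
          Real.sinh (x / 2 * Real.sqrt y)))
    (y : ℝ) (hy0 : 0 < y) (hy1 : y < 1) (N : ℕ) :
    ∑ kl ∈ Finset.HasAntidiagonal.antidiagonal N,
      (∑ k ∈ Finset.range (kl.1+1), A (kl.1+1) k * y^k) * y^kl.2 /
        ((Nat.factorial (2*(kl.1+1)) : ℝ) * (2^(2*kl.2+1) * (Nat.factorial (2*kl.2+1) : ℝ)))
    = ((y+4)^(N+1) - y^(N+1)) / (2 * 4^(N+1) * (Nat.factorial (2*(N+1)) : ℝ)) := by
  have hyle : (0:ℝ) ≤ y := hy0.le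
  have hsqy : (0:ℝ) < Real.sqrt y := Real.sqrt_pos.mpr hy0
  set Q : ℕ → ℝ := fun m => ∑ k ∈ Finset.range m, A m k * y^k with hQdef
  set w : ℕ → ℝ := fun n =>
    (∑ kl ∈ Finset.HasAntidiagonal.antidiagonal n,
      Q (kl.1+1) * y^kl.2 * Real.sqrt y /
        ((Nat.factorial (2*(kl.1+1)) : ℝ) * (2^(2*kl.2+1) * (Nat.factorial (2*kl.2+1) : ℝ))))
    - Real.sqrt y * (((y+4)^(n+1) - y^(n+1)) / (2 * 4^(n+1) * (Nat.factorial (2*(n+1)) : ℝ)))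
    with hwdef
  have hwzero : ∀ n, w n = 0 := by
    apply keyzero
    intro t ht
    set x : ℝ := Real.sqrt t with hxdef
    have hx0 : 0 < x := Real.sqrt_pos.mpr ht.1
    have hx1 : x < 1 := by
      rw [hxdef, show (1:ℝ) = Real.sqrt 1 by simp]
      exact Real.sqrt_lt_sqrt ht.1.le ht.2
    have hxsq : x^2 = t := Real.sq_sqrt ht.1.le
    have habs : |x| < 1 := by rwa [abs_of_pos hx0]
    -- fiberwise sums
    have hfib : ∀ b : ℕ, HasSum
        (fun k => x ^ (2*(b+1)) / (Nat.factorial (2*(b+1)) : ℝ) * A (b+1) k * y ^ k)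
        (x ^ (2*(b+1)) / (Nat.factorial (2*(b+1)) : ℝ) * Q (b+1)) := by
      intro b
      have h1 : ∀ k ∉ Finset.range (b+1),
          x ^ (2*(b+1)) / (Nat.factorial (2*(b+1)) : ℝ) * A (b+1) k * y ^ k = 0 := by
        intro k hk
        rw [hA0 (b+1) k (le_of_not_gt (fun hc => hk (Finset.mem_range.mpr hc)))]
        ring
      have h2 : HasSum _ _ := hasSum_sum_of_ne_finset_zero h1
      convert h2 using 1
      rw [hQdef, Finset.mul_sum]
      exact Finset.sum_congr rfl (fun k _ => by ring)
    have hF : HasSum (fun b : ℕ => x ^ (2*(b+1)) / (Nat.factorial (2*(b+1)) : ℝ) * Q (b+1))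
        ((x * Real.sqrt y / 2) *
          (Real.cosh (x / 2 * Real.sqrt (y + 4)) - Real.cosh (x / 2 * Real.sqrt y)) /
          Real.sinh (x / 2 * Real.sqrt y)) :=
      HasSum.prod_fiberwise (hA x y habs hy0 hy1) hfib
    have hsinh : HasSum (fun j : ℕ =>
        (x/2*Real.sqrt y)^(2*j+1) / (Nat.factorial (2*j+1) : ℝ))
        (Real.sinh (x/2*Real.sqrt y)) := Real.hasSum_sinh _
    have hFn := summable_norm_iff.mpr hF.summable
    have hsn := summable_norm_iff.mpr hsinh.summable
    have hmul := tsum_mul_tsum_eq_tsum_sum_antidiagonal_of_summable_norm hFn hsn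
    have hcsum : Summable (fun n : ℕ => ∑ kl ∈ Finset.HasAntidiagonal.antidiagonal n,
        (x ^ (2*(kl.1+1)) / (Nat.factorial (2*(kl.1+1)) : ℝ) * Q (kl.1+1)) *
        ((x/2*Real.sqrt y)^(2*kl.2+1) / (Nat.factorial (2*kl.2+1) : ℝ))) :=
      (summable_norm_sum_mul_antidiagonal_of_summable_norm hFn hsn).of_norm
    have hsinhpos : 0 < Real.sinh (x/2*Real.sqrt y) :=
      Real.sinh_pos_iff.mpr (by positivity)
    have hC : HasSum (fun n : ℕ => ∑ kl ∈ Finset.HasAntidiagonal.antidiagonal n,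
        (x ^ (2*(kl.1+1)) / (Nat.factorial (2*(kl.1+1)) : ℝ) * Q (kl.1+1)) *
        ((x/2*Real.sqrt y)^(2*kl.2+1) / (Nat.factorial (2*kl.2+1) : ℝ)))
        ((x * Real.sqrt y / 2) *
          (Real.cosh (x / 2 * Real.sqrt (y + 4)) - Real.cosh (x / 2 * Real.sqrt y))) := by
      have h3 := hcsum.hasSum
      rw [← hmul, hF.tsum_eq, hsinh.tsum_eq] at h3
      rwa [div_mul_cancel₀ _ (ne_of_gt hsinhpos)] at h3
    have hcoshsum : HasSum (fun m : ℕ => (x*Real.sqrt y/2) *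
        ((x/2*Real.sqrt (y+4))^(2*m)/(Nat.factorial (2*m):ℝ)
          - (x/2*Real.sqrt y)^(2*m)/(Nat.factorial (2*m):ℝ)))
        ((x * Real.sqrt y / 2) *
          (Real.cosh (x / 2 * Real.sqrt (y + 4)) - Real.cosh (x / 2 * Real.sqrt y))) :=
      ((Real.hasSum_cosh _).sub (Real.hasSum_cosh _)).mul_left _
    have hR1 : HasSum (fun m : ℕ => (x*Real.sqrt y/2) *
        ((x/2*Real.sqrt (y+4))^(2*(m+1))/(Nat.factorial (2*(m+1)):ℝ)
          - (x/2*Real.sqrt y)^(2*(m+1))/(Nat.factorial (2*(m+1)):ℝ)))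
        ((x * Real.sqrt y / 2) *
          (Real.cosh (x / 2 * Real.sqrt (y + 4)) - Real.cosh (x / 2 * Real.sqrt y))) := by
      refine (hasSum_nat_add_iff (f := fun m : ℕ => (x*Real.sqrt y/2) *
        ((x/2*Real.sqrt (y+4))^(2*m)/(Nat.factorial (2*m):ℝ)
          - (x/2*Real.sqrt y)^(2*m)/(Nat.factorial (2*m):ℝ))) 1).mpr ?_
      simpa using hcoshsum
    have hdiff := hC.sub hR1
    rw [sub_self] at hdiff
    have hterm : ∀ n : ℕ,
        ((∑ kl ∈ Finset.HasAntidiagonal.antidiagonal n,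
          (x ^ (2*(kl.1+1)) / (Nat.factorial (2*(kl.1+1)) : ℝ) * Q (kl.1+1)) *
          ((x/2*Real.sqrt y)^(2*kl.2+1) / (Nat.factorial (2*kl.2+1) : ℝ)))
        - (x*Real.sqrt y/2) *
          ((x/2*Real.sqrt (y+4))^(2*(n+1))/(Nat.factorial (2*(n+1)):ℝ)
            - (x/2*Real.sqrt y)^(2*(n+1))/(Nat.factorial (2*(n+1)):ℝ)))
        = x^3 * (w n * (x^2)^n) := by
      intro n
      have h1 : (∑ kl ∈ Finset.HasAntidiagonal.antidiagonal n,
          (x ^ (2*(kl.1+1)) / (Nat.factorial (2*(kl.1+1)) : ℝ) * Q (kl.1+1)) *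
          ((x/2*Real.sqrt y)^(2*kl.2+1) / (Nat.factorial (2*kl.2+1) : ℝ)))
          = x^3 * ((x^2)^n * ∑ kl ∈ Finset.HasAntidiagonal.antidiagonal n,
            Q (kl.1+1) * y^kl.2 * Real.sqrt y /
              ((Nat.factorial (2*(kl.1+1)) : ℝ) *
                (2^(2*kl.2+1) * (Nat.factorial (2*kl.2+1) : ℝ)))) := by
        rw [Finset.mul_sum, Finset.mul_sum]
        apply Finset.sum_congr rfl
        rintro ⟨i, j⟩ hkl
        have hij : i + j = n := Finset.HasAntidiagonal.mem_antidiagonal.mp hkl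
        subst hij
        have hsq : (Real.sqrt y)^(2*j+1) = y^j * Real.sqrt y := by
          rw [pow_succ, pow_mul, Real.sq_sqrt hyle]
        have expand : (x/2*Real.sqrt y)^(2*j+1)
            = x^(2*j+1) * (y^j * Real.sqrt y) / 2^(2*j+1) := by
          rw [mul_pow, div_pow, hsq]; ring
        rw [expand]
        ring
      have e1 : (x/2*Real.sqrt (y+4))^(2*(n+1))
          = (x^2)^(n+1)*(y+4)^(n+1)/4^(n+1) := by
        rw [pow_mul, show (x/2*Real.sqrt (y+4))^2 = x^2*(y+4)/4 from by
          rw [mul_pow, div_pow, Real.sq_sqrt (by linarith : (0:ℝ) ≤ y + 4)]; ring]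
        rw [div_pow, mul_pow]
      have e2 : (x/2*Real.sqrt y)^(2*(n+1)) = (x^2)^(n+1)*y^(n+1)/4^(n+1) := by
        rw [pow_mul, show (x/2*Real.sqrt y)^2 = x^2*y/4 from by
          rw [mul_pow, div_pow, Real.sq_sqrt hyle]; ring]
        rw [div_pow, mul_pow]
      rw [h1, e1, e2, hwdef]
      simp only []
      ring
    rw [funext hterm] at hdiff
    have h4 := hdiff.mul_left ((x^3)⁻¹)
    rw [mul_zero] at h4
    have hx3 : (x^3) ≠ 0 := pow_ne_zero 3 hx0.ne'
    have h5 : (fun n : ℕ => (x^3)⁻¹ * (x^3 * (w n * (x^2)^n)))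
        = fun n => w n * t^n := by
      funext n
      rw [inv_mul_cancel_left₀ hx3, hxsq]
    rwa [h5] at h4
  -- conclude the identity
  have h := hwzero N
  rw [hwdef] at h
  simp only [] at h
  rw [sub_eq_zero] at h
  have hL : (∑ kl ∈ Finset.HasAntidiagonal.antidiagonal N,
      Q (kl.1+1) * y^kl.2 * Real.sqrt y /
        ((Nat.factorial (2*(kl.1+1)) : ℝ) * (2^(2*kl.2+1) * (Nat.factorial (2*kl.2+1) : ℝ))))
      = Real.sqrt y * ∑ kl ∈ Finset.HasAntidiagonal.antidiagonal N,
      Q (kl.1+1) * y^kl.2 /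
        ((Nat.factorial (2*(kl.1+1)) : ℝ) * (2^(2*kl.2+1) * (Nat.factorial (2*kl.2+1) : ℝ))) := by
    rw [Finset.mul_sum]
    exact Finset.sum_congr rfl (fun kl _ => by ring)
  rw [hL] at h
  exact mul_left_cancel₀ (ne_of_gt hsqy) h

section PolyPart

variable (A : ℕ → ℕ → ℝ)

/-- the polynomial identity -/
lemma polyid
    (hA0 : ∀ n k : ℕ, n ≤ k → A n k = 0)
    (hA : ∀ x y : ℝ, |x| < 1 → 0 < y → y < 1 →
      HasSum (fun p : ℕ × ℕ =>
        x ^ (2 * (p.1 + 1)) / (Nat.factorial (2 * (p.1 + 1)) : ℝ) *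
          A (p.1 + 1) p.2 * y ^ p.2)
        ((x * Real.sqrt y / 2) *
          (Real.cosh (x / 2 * Real.sqrt (y + 4)) - Real.cosh (x / 2 * Real.sqrt y)) /
          Real.sinh (x / 2 * Real.sqrt y)))
    (N : ℕ) :
    (∑ kl ∈ Finset.HasAntidiagonal.antidiagonal N,
      Polynomial.C ((1:ℝ) / ((Nat.factorial (2*(kl.1+1)) : ℝ) *
          (2^(2*kl.2+1) * (Nat.factorial (2*kl.2+1) : ℝ)))) *
        (∑ k ∈ Finset.range (kl.1+1), Polynomial.C (A (kl.1+1) k) * Polynomial.X^k) *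
        Polynomial.X^kl.2)
    = Polynomial.C ((1:ℝ) / (2 * 4^(N+1) * (Nat.factorial (2*(N+1)) : ℝ))) *
        ((Polynomial.X + Polynomial.C (4:ℝ))^(N+1) - Polynomial.X^(N+1)) := by
  apply Polynomial.eq_of_infinite_eval_eq
  apply Set.Infinite.mono (s := Set.Ioo (0:ℝ) 1)
  · intro y hy
    have hm := master A hA0 hA y hy.1 hy.2 N
    simp only [Set.mem_setOf_eq, eval_mul, eval_finset_sum, eval_pow, eval_C, eval_X,
      eval_add, eval_sub]
    calc ∑ kl ∈ Finset.HasAntidiagonal.antidiagonal N,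
          (1:ℝ) / ((Nat.factorial (2*(kl.1+1)) : ℝ) *
            (2^(2*kl.2+1) * (Nat.factorial (2*kl.2+1) : ℝ))) *
          (∑ k ∈ Finset.range (kl.1+1), A (kl.1+1) k * y^k) * y^kl.2
        = ∑ kl ∈ Finset.HasAntidiagonal.antidiagonal N,
          (∑ k ∈ Finset.range (kl.1+1), A (kl.1+1) k * y^k) * y^kl.2 /
            ((Nat.factorial (2*(kl.1+1)) : ℝ) *
              (2^(2*kl.2+1) * (Nat.factorial (2*kl.2+1) : ℝ))) := by
          exact Finset.sum_congr rfl (fun kl _ => by ring)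
      _ = ((y+4)^(N+1) - y^(N+1)) / (2 * 4^(N+1) * (Nat.factorial (2*(N+1)) : ℝ)) := hm
      _ = (1:ℝ) / (2 * 4^(N+1) * (Nat.factorial (2*(N+1)) : ℝ)) * ((y+4)^(N+1) - y^(N+1)) := by
          ring
  · exact Set.Ioo_infinite (by norm_num)

lemma coeffQ (m d : ℕ) :
    (∑ k ∈ Finset.range m, Polynomial.C (A m k) * Polynomial.X^k).coeff d
      = if d < m then A m d else 0 := by
  rw [Polynomial.finset_sum_coeff]
  have h1 : ∀ k ∈ Finset.range m, (Polynomial.C (A m k) * Polynomial.X^k).coeff d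
      = if d = k then A m k else 0 := by
    intro k _
    rw [Polynomial.coeff_C_mul, Polynomial.coeff_X_pow]
    by_cases h : d = k
    · simp [h]
    · simp [h]
  rw [Finset.sum_congr rfl h1, Finset.sum_ite_eq (Finset.range m) d (fun k => A m k)]
  simp [Finset.mem_range]

end PolyPart

section Extract
variable (A : ℕ → ℕ → ℝ)

lemma coeffL (N d : ℕ) :
    (∑ kl ∈ Finset.HasAntidiagonal.antidiagonal N,
      Polynomial.C ((1:ℝ) / ((Nat.factorial (2*(kl.1+1)) : ℝ) *
          (2^(2*kl.2+1) * (Nat.factorial (2*kl.2+1) : ℝ)))) *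
        (∑ k ∈ Finset.range (kl.1+1), Polynomial.C (A (kl.1+1) k) * Polynomial.X^k) *
        Polynomial.X^kl.2).coeff d
    = ∑ i ∈ Finset.range (N+1),
        (if N - i ≤ d then
          ((1:ℝ) / ((Nat.factorial (2*(i+1)) : ℝ) *
            (2^(2*(N-i)+1) * (Nat.factorial (2*(N-i)+1) : ℝ)))) *
          (if d - (N-i) < i+1 then A (i+1) (d-(N-i)) else 0)
        else 0) := by
  rw [Polynomial.finset_sum_coeff]
  rw [Finset.Nat.sum_antidiagonal_eq_sum_range_succ_mk]
  dsimp only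
  apply Finset.sum_congr rfl
  intro i _
  rw [Polynomial.coeff_mul_X_pow']
  split_ifs with h h2
  · rw [Polynomial.coeff_C_mul, coeffQ, if_pos h2]
  · rw [Polynomial.coeff_C_mul, coeffQ, if_neg h2, mul_zero]
  · rfl

lemma fact_step (m : ℕ) :
    (Nat.factorial (m+2) : ℝ) = ((m:ℝ)+2)*((m:ℝ)+1)*(Nat.factorial m : ℝ) := by
  rw [show m+2 = (m+1)+1 from rfl, Nat.factorial_succ, Nat.factorial_succ]
  push_cast; ring

lemma A0val (hA0 : ∀ n k : ℕ, n ≤ k → A n k = 0)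
    (hA : ∀ x y : ℝ, |x| < 1 → 0 < y → y < 1 →
      HasSum (fun p : ℕ × ℕ =>
        x ^ (2 * (p.1 + 1)) / (Nat.factorial (2 * (p.1 + 1)) : ℝ) *
          A (p.1 + 1) p.2 * y ^ p.2)
        ((x * Real.sqrt y / 2) *
          (Real.cosh (x / 2 * Real.sqrt (y + 4)) - Real.cosh (x / 2 * Real.sqrt y)) /
          Real.sinh (x / 2 * Real.sqrt y)))
    (K : ℕ) : A (K+1) 0 = 1 := by
  have hp := polyid A hA0 hA K
  have hc := congrArg (fun p : Polynomial ℝ => p.coeff 0) hp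
  rw [coeffL, Polynomial.coeff_C_mul, Polynomial.coeff_sub, Polynomial.coeff_X_add_C_pow,
    Polynomial.coeff_X_pow, Finset.sum_range_succ,
    Finset.sum_eq_zero (fun i hi => if_neg (by
      have := Finset.mem_range.mp hi; omega))] at hc
  simp only [Nat.sub_self, Nat.le_refl, if_true, Nat.sub_zero, Nat.zero_sub] at hc
  norm_num [Nat.factorial] at hc
  have hf : (0:ℝ) < (Nat.factorial (2*(K+1)) : ℝ) :=
    Nat.cast_pos.mpr (Nat.factorial_pos _)
  have h4 : (0:ℝ) < (4:ℝ)^(K+1) := by positivity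
  field_simp at hc
  have hC : ((Nat.factorial (2*K) : ℝ) * (2*(K:ℝ)+1) * (2*(K:ℝ)+1+1) * ((4:ℝ)^(K+1)*2)) ≠ 0 := by
    positivity
  exact hc


lemma A1val (hA0 : ∀ n k : ℕ, n ≤ k → A n k = 0)
    (hA : ∀ x y : ℝ, |x| < 1 → 0 < y → y < 1 →
      HasSum (fun p : ℕ × ℕ =>
        x ^ (2 * (p.1 + 1)) / (Nat.factorial (2 * (p.1 + 1)) : ℝ) *
          A (p.1 + 1) p.2 * y ^ p.2)
        ((x * Real.sqrt y / 2) *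
          (Real.cosh (x / 2 * Real.sqrt (y + 4)) - Real.cosh (x / 2 * Real.sqrt y)) /
          Real.sinh (x / 2 * Real.sqrt y)))
    (K : ℕ) : A (K+2) 1 = -((K:ℝ)+2)*K/6 := by
  have hp := polyid A hA0 hA (K+1)
  have hc := congrArg (fun p : Polynomial ℝ => p.coeff 1) hp
  rw [coeffL, Polynomial.coeff_C_mul, Polynomial.coeff_sub, Polynomial.coeff_X_add_C_pow,
    Polynomial.coeff_X_pow, Finset.sum_range_succ, Finset.sum_range_succ,
    Finset.sum_eq_zero (fun i hi => if_neg (by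
      have := Finset.mem_range.mp hi; omega))] at hc
  rw [show K+1-K = 1 by omega, Nat.sub_self] at hc
  norm_num [Nat.factorial, Nat.choose_one_right] at hc
  rw [A0val A hA0 hA K] at hc
  have hF : (Nat.factorial (2*K) : ℝ) ≠ 0 :=
    ne_of_gt (Nat.cast_pos.mpr (Nat.factorial_pos _))
  rw [show (4:ℝ)^(K+1+1) = 4*(4:ℝ)^(K+1) by rw [pow_succ]; ring] at hc
  have h4 : ((4:ℝ)^(K+1)) ≠ 0 := by positivity
  have ha : (2*(K:ℝ)+1) ≠ 0 := by positivity
  have hb : (2*(K:ℝ)+1+1) ≠ 0 := by positivity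
  have hcc : (2*((K:ℝ)+1)+1) ≠ 0 := by positivity
  have hd : (2*((K:ℝ)+1)+1+1) ≠ 0 := by positivity
  field_simp at hc
  rw [show K+1+1 = K+2 from rfl] at hc
  have hP : ((48:ℝ)*((Nat.factorial (2*K):ℝ)*(2*(K:ℝ)+1)*(2*(K:ℝ)+1+1))) *
      ((Nat.factorial (2*K):ℝ)*(2*(K:ℝ)+1)*(2*(K:ℝ)+1+1)*(2*((K:ℝ)+1)+1)*(2*((K:ℝ)+1)+1+1)*
        (4*(4:ℝ)^(K+1)*2)) ≠ 0 := by positivity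
  rw [show 2*(K+2) = 2*(K+1)+2 by ring, fact_step (2*(K+1))] at hc
  push_cast at hc
  have hG : (Nat.factorial (2*(K+1)) : ℝ) ≠ 0 := by positivity
  apply mul_left_cancel₀ hG
  linear_combination hc/192


lemma A2val (hA0 : ∀ n k : ℕ, n ≤ k → A n k = 0)
    (hA : ∀ x y : ℝ, |x| < 1 → 0 < y → y < 1 →
      HasSum (fun p : ℕ × ℕ =>
        x ^ (2 * (p.1 + 1)) / (Nat.factorial (2 * (p.1 + 1)) : ℝ) *
          A (p.1 + 1) p.2 * y ^ p.2)
        ((x * Real.sqrt y / 2) *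
          (Real.cosh (x / 2 * Real.sqrt (y + 4)) - Real.cosh (x / 2 * Real.sqrt y)) /
          Real.sinh (x / 2 * Real.sqrt y)))
    (K : ℕ) : A (K+3) 2 = ((K:ℝ)+3)*((K:ℝ)+2)*K*(7*(K:ℝ)+13)/360 := by
  have hp := polyid A hA0 hA (K+2)
  have hc := congrArg (fun p : Polynomial ℝ => p.coeff 2) hp
  rw [coeffL, Polynomial.coeff_C_mul, Polynomial.coeff_sub, Polynomial.coeff_X_add_C_pow,
    Polynomial.coeff_X_pow, Finset.sum_range_succ, Finset.sum_range_succ, Finset.sum_range_succ,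
    Finset.sum_eq_zero (fun i hi => if_neg (by
      have := Finset.mem_range.mp hi; omega))] at hc
  rw [show K+2-K = 2 by omega, show K+2-(K+1) = 1 by omega, Nat.sub_self] at hc
  rw [show ((Nat.choose (K+2+1) 2 : ℕ) : ℝ) = ((K:ℝ)+3)*((K:ℝ)+2)/2 from by
    rw [Nat.cast_choose_two]; push_cast; ring] at hc
  norm_num [Nat.factorial] at hc
  rw [A0val A hA0 hA K, A1val A hA0 hA K] at hc
  have hF : (Nat.factorial (2*K) : ℝ) ≠ 0 :=
    ne_of_gt (Nat.cast_pos.mpr (Nat.factorial_pos _))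
  rw [show (4:ℝ)^(K+2+1) = 16*(4:ℝ)^(K+1) from by rw [pow_succ, pow_succ]; ring] at hc
  have h4 : ((4:ℝ)^(K+1)) ≠ 0 := by positivity
  have ha : (2*(K:ℝ)+1) ≠ 0 := by positivity
  have hb : (2*(K:ℝ)+1+1) ≠ 0 := by positivity
  have hcc : (2*((K:ℝ)+1)+1) ≠ 0 := by positivity
  have hd : (2*((K:ℝ)+1)+1+1) ≠ 0 := by positivity
  have he : (2*((K:ℝ)+2)+1) ≠ 0 := by positivity
  have hg : (2*((K:ℝ)+2)+1+1) ≠ 0 := by positivity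
  field_simp at hc
  rw [show K+2+1-2 = K+1 by omega, show K+2+1 = K+3 from rfl] at hc
  have hP : ((3840:ℝ)*((Nat.factorial (2*K):ℝ)*(2*(K:ℝ)+1)*(2*(K:ℝ)+1+1)) *
        (48*((Nat.factorial (2*K):ℝ)*(2*(K:ℝ)+1)*(2*(K:ℝ)+1+1)*(2*((K:ℝ)+1)+1)*(2*((K:ℝ)+1)+1+1))*6)) *
      ((Nat.factorial (2*K):ℝ)*(2*(K:ℝ)+1)*(2*(K:ℝ)+1+1)*(2*((K:ℝ)+1)+1)*(2*((K:ℝ)+1)+1+1)*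
        (2*((K:ℝ)+2)+1)*(2*((K:ℝ)+2)+1+1)*(16*(4:ℝ)^(K+1)*2)*2) ≠ 0 := by positivity
  rw [show 2*(K+3) = 2*(K+1+1)+2 by ring, fact_step (2*(K+1+1)),
    show 2*(K+1+1) = 2*(K+1)+2 by ring, fact_step (2*(K+1))] at hc
  push_cast at hc
  have hG : (32*(4:ℝ)^(K+1)*((2*(K:ℝ)+4)*(2*(K:ℝ)+3))*(Nat.factorial (2*(K+1)) : ℝ)^2*1105920) ≠ 0 := by
    positivity
  apply mul_left_cancel₀ hG
  linear_combination hc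

end Extract




/-- For every integer `n ≥ 3`,
`b(n, n−2) = (7/360)(n−3)(n − 8/7) n!(n−2)!/(2n−3)!`. -/
theorem b_second_subdiagonal
    (A : ℕ → ℕ → ℝ)
    (hA0 : ∀ n k : ℕ, n ≤ k → A n k = 0)
    (hA : ∀ x y : ℝ, |x| < 1 → 0 < y → y < 1 →
      HasSum (fun p : ℕ × ℕ =>
        x ^ (2 * (p.1 + 1)) / (Nat.factorial (2 * (p.1 + 1)) : ℝ) *
          A (p.1 + 1) p.2 * y ^ p.2)
        ((x * Real.sqrt y / 2) *
          (Real.cosh (x / 2 * Real.sqrt (y + 4)) - Real.cosh (x / 2 * Real.sqrt y)) /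
          Real.sinh (x / 2 * Real.sqrt y))) :
    ∀ n : ℕ, 3 ≤ n →
      bcoef A n (n - 2) =
        (7 / 360) * ((n : ℝ) - 3) * ((n : ℝ) - 8 / 7) * (Nat.factorial n : ℝ) *
          (Nat.factorial (n - 2) : ℝ) / (Nat.factorial (2 * n - 3) : ℝ) := by
  intro n hn
  obtain ⟨K, rfl⟩ : ∃ K, n = K + 3 := ⟨n - 3, by omega⟩
  rw [bcoef, show K + 3 - 2 = K + 1 by omega, show K + 3 - (K + 1) = 2 by omega,
    show 2 * (K + 3) - 3 = 2 * (K + 1) + 1 by omega, A2val A hA0 hA K]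
  have h1 : ((Nat.factorial (K+1) : ℝ)) ≠ 0 :=
    ne_of_gt (Nat.cast_pos.mpr (Nat.factorial_pos _))
  have h2 : ((Nat.factorial (2*(K+1)+1) : ℝ)) ≠ 0 :=
    ne_of_gt (Nat.cast_pos.mpr (Nat.factorial_pos _))
  rw [show K + 3 = (K+1) + 2 by omega, fact_step]
  push_cast
  field_simp
  ring
end
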